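/- arXiv:2212.06093 — 4 statements merged into one kernel-verified Lean document; each statement's English description precedes it below -/
import Mathlib

section
/- Let Ω_{nℓ} ⊆ ℝ^N be an open, bounded, δ-connected set and let J satisfy the hypotheses below with the same δ. If v ∈ L²(Ω_{nℓ}) satisfies ∫_{Ω_{nℓ}} ∫_{Ω_{nℓ}} J(x−y) (v(y) − v(x))² dy dx = 0, then v is almost everywhere equal to a constant on Ω_{nℓ}. -/
open MeasureTheory Metric

/-- An open set `D ⊆ ℝ^N` is `δ`-connected if it cannot be written as a disjoint union of
two nonempty (relatively) open sets that are at distance greater than or equal to `δ`. -/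
def DeltaConnected {N : ℕ} (δ : ℝ) (D : Set (EuclideanSpace ℝ (Fin N))) : Prop :=
  ¬ ∃ A B : Set (EuclideanSpace ℝ (Fin N)),
      IsOpen A ∧ IsOpen B ∧ A.Nonempty ∧ B.Nonempty ∧
      A ∪ B = D ∧ A ∩ B = ∅ ∧ ∀ x ∈ A, ∀ y ∈ B, δ ≤ dist x y

/-- If the nonlocal energy of `v ∈ L²(Ω_{nℓ})` vanishes, then `v` is a.e. constant on the
bounded open `δ`-connected set `Ω_{nℓ}`. -/
theorem ae_const_of_nonlocal_energy_eq_zero {N : ℕ} (δ : ℝ) (hδ : 0 < δ)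
    (Ωnl : Set (EuclideanSpace ℝ (Fin N)))
    (hΩnl_open : IsOpen Ωnl) (hΩnl_bdd : Bornology.IsBounded Ωnl)
    (hΩnl_conn : DeltaConnected δ Ωnl)
    (J : EuclideanSpace ℝ (Fin N) → ℝ)
    (hJ_nonneg : ∀ z, 0 ≤ J z)
    (hJ_symm : ∀ z, J (-z) = J z)
    (hJ_bdd : ∃ M : ℝ, ∀ z, J z ≤ M)
    (hJ_int : Integrable J)
    (hJ1 : ∃ c > (0 : ℝ), ∀ z, ‖z‖ ≤ 2 * δ → c ≤ J z)
    (v : EuclideanSpace ℝ (Fin N) → ℝ)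
    (hv : MemLp v 2 (volume.restrict Ωnl))
    (hzero : ∫ x in Ωnl, ∫ y in Ωnl, J (x - y) * (v y - v x) ^ 2 = 0) :
    ∃ c : ℝ, ∀ᵐ x ∂(volume.restrict Ωnl), v x = c := by
  classical
  rcases Ωnl.eq_empty_or_nonempty with hE | hne
  · exact ⟨0, by simp [hE]⟩
  obtain ⟨c₀, hc₀pos, hc₀⟩ := hJ1
  obtain ⟨M, hM⟩ := hJ_bdd
  set μ := volume.restrict Ωnl with hμdef
  have hΩm : MeasurableSet Ωnl := hΩnl_open.measurableSet
  haveI : IsFiniteMeasure μ := ⟨by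
    rw [Measure.restrict_apply_univ]
    exact hΩnl_bdd.measure_lt_top⟩
  have hvm : AEStronglyMeasurable v μ := hv.aestronglyMeasurable
  have hJm : AEStronglyMeasurable (fun z : _ × _ => J (z.1 - z.2)) (μ.prod μ) := by
    have h1 : AEStronglyMeasurable (fun z : _ × _ => J (z.1 - z.2))
        ((volume : Measure (EuclideanSpace ℝ (Fin N))).prod volume) :=
      hJ_int.aestronglyMeasurable.comp_quasiMeasurePreserving
        (MeasureTheory.quasiMeasurePreserving_sub _ _)
    rw [hμdef, Measure.prod_restrict]
    exact h1.restrict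
  set F : EuclideanSpace ℝ (Fin N) × EuclideanSpace ℝ (Fin N) → ℝ :=
    fun z => J (z.1 - z.2) * (v z.2 - v z.1) ^ 2 with hF
  have hFm : AEStronglyMeasurable F (μ.prod μ) :=
    hJm.mul ((hvm.comp_snd.sub hvm.comp_fst).pow 2)
  have hsq : Integrable (fun x => v x ^ 2) μ := hv.integrable_sq
  have hdom1 : Integrable (fun z : EuclideanSpace ℝ (Fin N) × EuclideanSpace ℝ (Fin N) =>
      v z.1 ^ 2) (μ.prod μ) := by
    simpa using hsq.mul_prod (integrable_const (1 : ℝ))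
  have hdom2 : Integrable (fun z : EuclideanSpace ℝ (Fin N) × EuclideanSpace ℝ (Fin N) =>
      v z.2 ^ 2) (μ.prod μ) := by
    simpa using (integrable_const (1 : ℝ)).mul_prod hsq
  have hM0 : 0 ≤ M := le_trans (hJ_nonneg 0) (hM 0)
  have hFint : Integrable F (μ.prod μ) := by
    refine Integrable.mono' (((hdom1.add hdom2).const_mul (2 * M))) hFm ?_
    refine Filter.Eventually.of_forall fun z => ?_
    have h1 : 0 ≤ F z := mul_nonneg (hJ_nonneg _) (sq_nonneg _)
    rw [Real.norm_of_nonneg h1]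
    have h2 : J (z.1 - z.2) ≤ M := hM _
    have h3 : (v z.2 - v z.1) ^ 2 ≤ 2 * (v z.1 ^ 2 + v z.2 ^ 2) := by nlinarith [sq_nonneg (v z.1 + v z.2)]
    have h4 : 0 ≤ (v z.2 - v z.1) ^ 2 := sq_nonneg _
    calc F z ≤ M * (v z.2 - v z.1) ^ 2 := mul_le_mul_of_nonneg_right h2 h4
      _ ≤ M * (2 * (v z.1 ^ 2 + v z.2 ^ 2)) := mul_le_mul_of_nonneg_left h3 hM0
      _ = 2 * M * (v z.1 ^ 2 + v z.2 ^ 2) := by ring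
  have key : ∫ z, F z ∂(μ.prod μ) = 0 := by
    have h := MeasureTheory.integral_integral (μ := μ) (ν := μ)
      (f := fun x y => J (x - y) * (v y - v x) ^ 2) hFint
    rw [← h]
    exact hzero
  have hF0 : F =ᵐ[μ.prod μ] 0 :=
    (integral_eq_zero_iff_of_nonneg (fun z => mul_nonneg (hJ_nonneg _) (sq_nonneg _)) hFint).mp key
  have haeprod : ∀ᵐ z ∂(μ.prod μ), dist z.1 z.2 ≤ 2 * δ → v z.2 = v z.1 := by
    filter_upwards [hF0] with z hz hd
    have hJpos : c₀ ≤ J (z.1 - z.2) := hc₀ _ (by rw [← dist_eq_norm]; exact hd)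
    have hz' : J (z.1 - z.2) * (v z.2 - v z.1) ^ 2 = 0 := hz
    by_contra hne'
    have hsq' : 0 < (v z.2 - v z.1) ^ 2 :=
      lt_of_le_of_ne (sq_nonneg _) (Ne.symm (pow_ne_zero 2 (sub_ne_zero.mpr hne')))
    nlinarith
  have hae : ∀ᵐ x ∂μ, ∀ᵐ y ∂μ, dist x y ≤ 2 * δ → v y = v x :=
    Measure.ae_ae_of_ae_prod haeprod
  set G : Set (EuclideanSpace ℝ (Fin N)) :=
    {x | x ∈ Ωnl ∧ ∀ᵐ y ∂μ, dist x y ≤ 2 * δ → v y = v x} with hG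
  have hGood : ∀ᵐ x ∂μ, x ∈ G := by
    filter_upwards [ae_restrict_mem hΩm, hae] with x h1 h2
    exact ⟨h1, h2⟩
  -- helper : positive-measure open subsets meet any co-null set
  have hfind : ∀ (U : Set (EuclideanSpace ℝ (Fin N))), IsOpen U → U.Nonempty → U ⊆ Ωnl →
      ∀ (p : EuclideanSpace ℝ (Fin N) → Prop), (∀ᵐ z ∂μ, p z) → ∃ z ∈ U, p z := by
    intro U hUo hUne hUsub p hp
    by_contra hcon
    push_neg at hcon
    have hsub : U ⊆ {z | ¬ p z} := fun z hz hpz => hcon z hz hpz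
    have h0 : μ {z | ¬ p z} = 0 := by
      rw [MeasureTheory.ae_iff] at hp; exact hp
    have hUpos : 0 < μ U := by
      rw [hμdef, Measure.restrict_apply hUo.measurableSet,
        Set.inter_eq_self_of_subset_left hUsub]
      exact hUo.measure_pos volume hUne
    exact absurd (le_trans (measure_mono hsub) (le_of_eq h0)) (not_le.mpr hUpos)
  -- key pairwise claim
  have key2 : ∀ x ∈ G, ∀ y ∈ G, dist x y < 2 * δ → v x = v y := by
    rintro x ⟨hxΩ, hx⟩ y ⟨hyΩ, hy⟩ hxy
    set U := Ωnl ∩ ball x (2 * δ) ∩ ball y (2 * δ) with hU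
    have hUo : IsOpen U := ((hΩnl_open.inter isOpen_ball).inter isOpen_ball)
    have hxU : x ∈ U := ⟨⟨hxΩ, mem_ball_self (by linarith)⟩, by
      rw [mem_ball]; exact hxy⟩
    obtain ⟨z, hzU, hz1, hz2⟩ := hfind U hUo ⟨x, hxU⟩
      (fun z hz => hz.1.1)
      (fun z => (dist x z ≤ 2 * δ → v z = v x) ∧ (dist y z ≤ 2 * δ → v z = v y))
      (hx.and hy)
    have h1 : v z = v x := hz1 (by rw [dist_comm]; exact (hzU.1.2 : dist z x < _).le)
    have h2 : v z = v y := hz2 (by rw [dist_comm]; exact (hzU.2 : dist z y < _).le)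
    rw [← h1, h2]
  -- pick a base point
  have hμne : μ ≠ 0 := by
    intro h
    exact (hΩnl_open.measure_pos volume hne).ne' (Measure.restrict_eq_zero.mp h)
  haveI : (ae μ).NeBot := ae_neBot.mpr hμne
  obtain ⟨x₀, hx₀⟩ := hGood.exists
  refine ⟨v x₀, ?_⟩
  have hall : ∀ x ∈ G, v x = v x₀ := by
    by_contra hcon
    push_neg at hcon
    obtain ⟨x₁, hx₁G, hx₁ne⟩ := hcon
    apply hΩnl_conn
    refine ⟨⋃ x ∈ {x | x ∈ G ∧ v x = v x₀}, (ball x (δ / 2) ∩ Ωnl),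
      ⋃ x ∈ {x | x ∈ G ∧ v x ≠ v x₀}, (ball x (δ / 2) ∩ Ωnl), ?_, ?_, ?_, ?_, ?_, ?_, ?_⟩
    · exact isOpen_biUnion fun _ _ => isOpen_ball.inter hΩnl_open
    · exact isOpen_biUnion fun _ _ => isOpen_ball.inter hΩnl_open
    · exact ⟨x₀, Set.mem_biUnion ⟨hx₀, rfl⟩ ⟨mem_ball_self (by linarith), hx₀.1⟩⟩
    · exact ⟨x₁, Set.mem_biUnion ⟨hx₁G, hx₁ne⟩ ⟨mem_ball_self (by linarith), hx₁G.1⟩⟩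
    · -- union = Ωnl
      apply Set.Subset.antisymm
      · intro z hz
        simp only [Set.mem_union, Set.mem_iUnion, Set.mem_inter_iff] at hz
        rcases hz with ⟨x, _, _, hzΩ⟩ | ⟨x, _, _, hzΩ⟩ <;> exact hzΩ
      · intro z hzΩ
        have hW : ∃ g ∈ ball z (δ / 2) ∩ Ωnl, g ∈ G := by
          refine hfind _ (isOpen_ball.inter hΩnl_open)
            ⟨z, mem_ball_self (by linarith), hzΩ⟩ (fun w hw => hw.2) _ hGood
        obtain ⟨g, hgW, hgG⟩ := hW
        have hzg : z ∈ ball g (δ / 2) := by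
          rw [mem_ball, dist_comm]; exact hgW.1
        by_cases hvg : v g = v x₀
        · exact Set.mem_union_left _ (Set.mem_biUnion ⟨hgG, hvg⟩ ⟨hzg, hzΩ⟩)
        · exact Set.mem_union_right _ (Set.mem_biUnion ⟨hgG, hvg⟩ ⟨hzg, hzΩ⟩)
    · -- disjoint
      rw [Set.eq_empty_iff_forall_notMem]
      rintro z ⟨hzA, hzB⟩
      simp only [Set.mem_iUnion, Set.mem_inter_iff, Set.mem_setOf_eq] at hzA hzB
      obtain ⟨x, ⟨hxG, hxc⟩, hzx, -⟩ := hzA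
      obtain ⟨y, ⟨hyG, hyc⟩, hzy, -⟩ := hzB
      have : dist x y < 2 * δ := by
        calc dist x y ≤ dist x z + dist z y := dist_triangle _ _ _
          _ < δ / 2 + δ / 2 := by
              have h1 : dist x z < δ / 2 := by rw [dist_comm]; exact hzx
              exact add_lt_add h1 hzy
          _ ≤ 2 * δ := by linarith
      exact hyc ((key2 x hxG y hyG this) ▸ hxc)
    · -- distance ≥ δ
      intro z hzA w hzB
      by_contra hlt
      push_neg at hlt
      simp only [Set.mem_iUnion, Set.mem_inter_iff, Set.mem_setOf_eq] at hzA hzB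
      obtain ⟨x, ⟨hxG, hxc⟩, hzx, -⟩ := hzA
      obtain ⟨y, ⟨hyG, hyc⟩, hwy, -⟩ := hzB
      have : dist x y < 2 * δ := by
        calc dist x y ≤ dist x z + dist z w + dist w y := dist_triangle4 _ _ _ _
          _ < δ / 2 + δ + δ / 2 := by
              have h1 : dist x z < δ / 2 := by rw [dist_comm]; exact hzx
              exact add_lt_add (add_lt_add h1 hlt) hwy
          _ ≤ 2 * δ := by linarith
      exact hyc ((key2 x hxG y hyG this) ▸ hxc)
  filter_upwards [hGood] with x hx
  exact hall x hx
end

section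
/- Assume Ω_{nℓ} ⊆ ℝ^N is open, bounded and δ-connected and that J satisfies (J1) and (J2). Then there exists a constant C > 0, depending only on Ω_{nℓ} and J, such that every v ∈ L²(Ω_{nℓ}) with ∫_{Ω_{nℓ}} v(x) dx = 0 satisfies ‖v‖²_{L²(Ω_{nℓ})} ≤ C ∫_{Ω_{nℓ}} ∫_{Ω_{nℓ}} J(x−y) (v(y) − v(x))² dy dx. -/
open MeasureTheory Metric

section Aux

variable {X : Type*} [MeasurableSpace X] {μ : MeasureTheory.Measure X}

lemma aux_int_sq {v : X → ℝ} {Q : Set X} (hvQ : IntegrableOn v Q μ)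
    (hv2Q : IntegrableOn (fun x => v x ^ 2) Q μ) (hQfin : μ Q ≠ ⊤) (b : ℝ) :
    IntegrableOn (fun y => (v y - b) ^ 2) Q μ := by
  have h : (fun y => (v y - b) ^ 2) = fun y => (v y ^ 2 - (2 * b) * v y) + b ^ 2 :=
    funext fun y => by ring
  rw [h]
  exact (hv2Q.sub (hvQ.const_mul _)).add (integrableOn_const hQfin)

lemma aux_inner {v : X → ℝ} {Q : Set X} (hvQ : IntegrableOn v Q μ)
    (hv2Q : IntegrableOn (fun x => v x ^ 2) Q μ) (hQfin : μ Q ≠ ⊤) (b : ℝ) :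
    ∫ y in Q, (v y - b) ^ 2 ∂μ =
      (∫ y in Q, v y ^ 2 ∂μ) + (-2 * ∫ y in Q, v y ∂μ) * b + (μ Q).toReal * b ^ 2 := by
  have h : ∀ y, (v y - b) ^ 2 = (v y ^ 2 - (2 * b) * v y) + b ^ 2 := fun y => by ring
  have i1 : Integrable (fun y => v y ^ 2 - 2 * b * v y) (μ.restrict Q) :=
    hv2Q.sub (hvQ.const_mul _)
  have i2 : Integrable (fun _ : X => b ^ 2) (μ.restrict Q) :=
    integrableOn_const hQfin
  simp_rw [h]
  rw [integral_add i1 i2, integral_sub hv2Q (hvQ.const_mul _), integral_const_mul _ _,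
    setIntegral_const]
  simp only [smul_eq_mul, measureReal_def]
  ring

lemma aux_expand {v : X → ℝ} {P Q : Set X}
    (hvP : IntegrableOn v P μ) (hv2P : IntegrableOn (fun x => v x ^ 2) P μ) (hPfin : μ P ≠ ⊤)
    (hvQ : IntegrableOn v Q μ) (hv2Q : IntegrableOn (fun x => v x ^ 2) Q μ) (hQfin : μ Q ≠ ⊤) :
    ∫ x in P, ∫ y in Q, (v y - v x) ^ 2 ∂μ ∂μ =
      (μ Q).toReal * (∫ x in P, v x ^ 2 ∂μ) + (μ P).toReal * (∫ y in Q, v y ^ 2 ∂μ)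
        - 2 * (∫ x in P, v x ∂μ) * (∫ y in Q, v y ∂μ) := by
  have h : ∀ x, ∫ y in Q, (v y - v x) ^ 2 ∂μ =
      (∫ y in Q, v y ^ 2 ∂μ) + (-2 * ∫ y in Q, v y ∂μ) * v x + (μ Q).toReal * v x ^ 2 :=
    fun x => aux_inner hvQ hv2Q hQfin (v x)
  have i0 : Integrable (fun _ : X => (∫ y in Q, v y ^ 2 ∂μ)) (μ.restrict P) :=
    integrableOn_const hPfin
  have i1 : Integrable (fun x => (∫ y in Q, v y ^ 2 ∂μ) + (-2 * ∫ y in Q, v y ∂μ) * v x)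
      (μ.restrict P) := i0.add (hvP.const_mul _)
  have i2 : Integrable (fun x => (μ Q).toReal * v x ^ 2) (μ.restrict P) := hv2P.const_mul _
  simp_rw [h]
  rw [integral_add i1 i2, integral_add i0 (hvP.const_mul _), integral_const_mul _ _,
    integral_const_mul _ _, setIntegral_const]
  simp only [smul_eq_mul, measureReal_def]
  ring

lemma aux_cover {ι : Type*} (T : Finset ι) (U : ι → Set X) (hU : ∀ t, MeasurableSet (U t))
    {g : X → ℝ} (hg : ∀ x, 0 ≤ g x) (hgi : IntegrableOn g (⋃ t ∈ T, U t) μ) :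
    ∫ x in ⋃ t ∈ T, U t, g x ∂μ ≤ ∑ t ∈ T, ∫ x in U t, g x ∂μ := by
  classical
  induction T using Finset.induction_on with
  | empty => simp
  | insert _ _ ha ih =>
    rename_i a T'
    rw [Finset.set_biUnion_insert] at hgi ⊢
    rw [Finset.sum_insert ha]
    have hB : MeasurableSet (⋃ t ∈ T', U t) := T'.measurableSet_biUnion (fun t _ => hU t)
    have key : ∫ x in U a ∪ ⋃ t ∈ T', U t, g x ∂μ ≤
        (∫ x in U a, g x ∂μ) + ∫ x in (⋃ t ∈ T', U t) \ U a, g x ∂μ := by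
      rw [← Set.union_diff_self,
        setIntegral_union disjoint_sdiff_self_right (hB.diff (hU a))
          (hgi.mono_set Set.subset_union_left)
          (hgi.mono_set (Set.diff_subset.trans Set.subset_union_right))]
    have h2 : ∫ x in (⋃ t ∈ T', U t) \ U a, g x ∂μ ≤ ∫ x in ⋃ t ∈ T', U t, g x ∂μ :=
      setIntegral_mono_set (hgi.mono_set Set.subset_union_right)
        (Filter.Eventually.of_forall hg) (HasSubset.Subset.eventuallyLE Set.diff_subset)
    have h3 := ih (hgi.mono_set Set.subset_union_right)
    linarith

end Aux

set_option maxHeartbeats 2000000 in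
/-- Nonlocal Poincaré inequality for mean-zero functions on a bounded open `δ`-connected set. -/
theorem nonlocal_poincare_mean_zero {N : ℕ} (δ : ℝ) (hδ : 0 < δ)
    (Ωnl : Set (EuclideanSpace ℝ (Fin N)))
    (hΩnl_open : IsOpen Ωnl) (hΩnl_bdd : Bornology.IsBounded Ωnl)
    (hΩnl_conn : DeltaConnected δ Ωnl)
    (J : EuclideanSpace ℝ (Fin N) → ℝ)
    (hJ_nonneg : ∀ z, 0 ≤ J z)
    (hJ_symm : ∀ z, J (-z) = J z)
    (hJ_bdd : ∃ M : ℝ, ∀ z, J z ≤ M)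
    (hJ_int : Integrable J)
    (hJ1 : ∃ c > (0 : ℝ), ∀ z, ‖z‖ ≤ 2 * δ → c ≤ J z)
    (hJ2 : ∃ K : Lp ℝ 2 (volume.restrict Ωnl) →L[ℝ] Lp ℝ 2 (volume.restrict Ωnl),
      IsCompactOperator K ∧ ∀ w : Lp ℝ 2 (volume.restrict Ωnl),
        ∀ᵐ x ∂(volume.restrict Ωnl), K w x = ∫ y in Ωnl, J (x - y) * w y) :
    ∃ C > (0 : ℝ), ∀ v : EuclideanSpace ℝ (Fin N) → ℝ,
      MemLp v 2 (volume.restrict Ωnl) → (∫ x in Ωnl, v x = 0) →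
      ∫ x in Ωnl, (v x) ^ 2 ≤
        C * ∫ x in Ωnl, ∫ y in Ωnl, J (x - y) * (v y - v x) ^ 2 := by
  classical
  obtain ⟨c, hc, hJc⟩ := hJ1
  obtain ⟨M, hM⟩ := hJ_bdd
  rcases Set.eq_empty_or_nonempty Ωnl with hΩe | hΩne
  · exact ⟨1, one_pos, fun v hv hm => by simp [hΩe]⟩
  have hΩmeas : MeasurableSet Ωnl := hΩnl_open.measurableSet
  have hΩfin : volume Ωnl ≠ ⊤ := hΩnl_bdd.measure_lt_top.ne
  -- the finite cover
  have htb : TotallyBounded Ωnl :=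
    (isCompact_of_isClosed_isBounded isClosed_closure hΩnl_bdd.closure).totallyBounded.subset
      subset_closure
  obtain ⟨T0, hT0sub, hT0fin, hT0cov⟩ :=
    totallyBounded_iff_subset.1 htb _ (dist_mem_uniformity (by positivity : (0:ℝ) < δ/4))
  set U : EuclideanSpace ℝ (Fin N) → Set (EuclideanSpace ℝ (Fin N)) :=
    fun t => ball t (δ/4) ∩ Ωnl with hU_def
  set T : Finset (EuclideanSpace ℝ (Fin N)) := hT0fin.toFinset with hT_def
  have hUopen : ∀ t, IsOpen (U t) := fun t => isOpen_ball.inter hΩnl_open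
  have hUmeas : ∀ t, MeasurableSet (U t) := fun t => (hUopen t).measurableSet
  have hUsub : ∀ t, U t ⊆ Ωnl := fun t => Set.inter_subset_right
  have hUne : ∀ t ∈ T, (U t).Nonempty := by
    intro t ht
    rw [hT_def, Set.Finite.mem_toFinset] at ht
    exact ⟨t, by simp [hU_def, mem_ball]; positivity, hT0sub ht⟩
  have hUcov : Ωnl = ⋃ t ∈ T, U t := by
    apply le_antisymm
    · intro x hx
      obtain ⟨t, ht, hxt⟩ := Set.mem_iUnion₂.1 (hT0cov hx)
      exact Set.mem_iUnion₂.2 ⟨t, by rwa [hT_def, Set.Finite.mem_toFinset], ⟨hxt, hx⟩⟩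
    · exact Set.iUnion₂_subset fun t _ => hUsub t
  have hTne : T.Nonempty := by
    obtain ⟨x, hx⟩ := hΩne
    rw [hUcov] at hx
    obtain ⟨t, ht, -⟩ := Set.mem_iUnion₂.1 hx
    exact ⟨t, ht⟩
  set m : EuclideanSpace ℝ (Fin N) → ℝ := fun t => (volume (U t)).toReal with hm_def
  have hUfin : ∀ t, volume (U t) ≠ ⊤ :=
    fun t => ((measure_mono (hUsub t)).trans_lt hΩfin.lt_top).ne
  have hmpos : ∀ t ∈ T, 0 < m t := fun t ht =>
    ENNReal.toReal_pos ((hUopen t).measure_pos volume (hUne t ht)).ne' (hUfin t)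
  set mmin : ℝ := T.inf' hTne m with hmmin_def
  have hmminpos : 0 < mmin := by
    obtain ⟨t, ht, hteq⟩ := T.exists_mem_eq_inf' hTne m
    rw [hmmin_def, hteq]; exact hmpos t ht
  have hmmin_le : ∀ t ∈ T, mmin ≤ m t := fun t ht => Finset.inf'_le m ht
  -- geometry: points of U t and U s are within 2δ when some pair is within δ
  have hgeom : ∀ t s, (∃ x ∈ U t, ∃ y ∈ U s, dist x y < δ) →
      ∀ x ∈ U t, ∀ y ∈ U s, c ≤ J (x - y) := by
    rintro t s ⟨x', hx', y', hy', hxy⟩ x hx y hy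
    have d1 : dist x y ≤ dist x x' + dist x' y' + dist y' y := dist_triangle4 x x' y' y
    have d2 : dist x x' ≤ dist x t + dist x' t := dist_triangle_right x x' t
    have d3 : dist y' y ≤ dist y' s + dist y s := dist_triangle_right y' y s
    have hxt : dist x t < δ/4 := hx.1
    have hx't : dist x' t < δ/4 := hx'.1
    have hys : dist y s < δ/4 := hy.1
    have hy's : dist y' s < δ/4 := hy'.1
    apply hJc
    rw [← dist_eq_norm]
    linarith
  have hgeom1 : ∀ t, ∀ x ∈ U t, ∀ y ∈ U t, c ≤ J (x - y) := by
    intro t x hx y hy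
    have d2 : dist x y ≤ dist x t + dist y t := dist_triangle_right x y t
    have hxt : dist x t < δ/4 := hx.1
    have hys : dist y t < δ/4 := hy.1
    apply hJc
    rw [← dist_eq_norm]
    linarith
  -- constant
  set C : ℝ := ∑ t ∈ T, (1 / (c * m t) + 2 * m t * (T.card : ℝ)^2 / (c * mmin^2)) with hC_def
  have hCpos : 0 < C := by
    rw [hC_def]
    apply Finset.sum_pos _ hTne
    intro t ht
    have h1 := hmpos t ht
    apply add_pos_of_pos_of_nonneg
    · positivity
    · exact div_nonneg (mul_nonneg (mul_nonneg zero_le_two h1.le) (sq_nonneg _))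
        (mul_nonneg hc.le (sq_nonneg _))
  refine ⟨C, hCpos, ?_⟩
  intro v hv hmean
  haveI hfin : IsFiniteMeasure (volume.restrict Ωnl) :=
    ⟨by simpa [Measure.restrict_apply_univ] using hΩfin.lt_top⟩
  have hvi : IntegrableOn v Ωnl volume :=
    memLp_one_iff_integrable.1 (hv.mono_exponent (by norm_num))
  have hv2i : IntegrableOn (fun x => v x ^ 2) Ωnl volume := hv.integrable_sq
  have hvU : ∀ t, IntegrableOn v (U t) volume := fun t => hvi.mono_set (hUsub t)
  have hv2U : ∀ t, IntegrableOn (fun x => v x ^ 2) (U t) volume :=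
    fun t => hv2i.mono_set (hUsub t)
  set I : EuclideanSpace ℝ (Fin N) → ℝ := fun t => ∫ x in U t, v x with hI_def
  set Nq : EuclideanSpace ℝ (Fin N) → ℝ := fun t => ∫ x in U t, v x ^ 2 with hNq_def
  set a : EuclideanSpace ℝ (Fin N) → ℝ := fun t => I t / m t with ha_def
  set E : ℝ := ∫ x in Ωnl, ∫ y in Ωnl, J (x - y) * (v y - v x) ^ 2 with hE_def
  have hG0 : ∀ x, 0 ≤ ∫ y in Ωnl, J (x - y) * (v y - v x) ^ 2 :=
    fun x => integral_nonneg fun y => mul_nonneg (hJ_nonneg _) (sq_nonneg _)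
  have hE0 : 0 ≤ E := integral_nonneg fun x => hG0 x
  have hac : (volume.restrict Ωnl).prod (volume.restrict Ωnl) ≪ volume.prod volume :=
    (Measure.absolutelyContinuous_of_le Measure.restrict_le_self).prod
      (Measure.absolutelyContinuous_of_le Measure.restrict_le_self)
  have hJae : AEStronglyMeasurable
      (fun p : EuclideanSpace ℝ (Fin N) × EuclideanSpace ℝ (Fin N) => J (p.1 - p.2))
      ((volume.restrict Ωnl).prod (volume.restrict Ωnl)) := by
    have h1 : AEStronglyMeasurable J volume := hJ_int.aestronglyMeasurable
    have h2 := h1.comp_quasiMeasurePreserving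
      (quasiMeasurePreserving_sub (volume : Measure (EuclideanSpace ℝ (Fin N))) volume)
    exact h2.mono_ac hac
  have hsqprod : Integrable
      (fun p : EuclideanSpace ℝ (Fin N) × EuclideanSpace ℝ (Fin N) => (v p.2 - v p.1) ^ 2)
      ((volume.restrict Ωnl).prod (volume.restrict Ωnl)) := by
    have e1 := Integrable.mul_prod hv2i (integrable_const (1 : ℝ) :
      Integrable _ (volume.restrict Ωnl))
    have e2 := (integrable_const (1 : ℝ) :
      Integrable _ (volume.restrict Ωnl)).mul_prod hv2i
    have e3 := Integrable.mul_prod hvi hvi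
    exact ((e1.add e2).sub (e3.const_mul 2)).congr (ae_of_all _ fun p => by simp; ring)
  have hFprod : Integrable
      (fun p : EuclideanSpace ℝ (Fin N) × EuclideanSpace ℝ (Fin N) =>
        J (p.1 - p.2) * (v p.2 - v p.1) ^ 2)
      ((volume.restrict Ωnl).prod (volume.restrict Ωnl)) :=
    hsqprod.bdd_mul hJae (c := M) (ae_of_all _ fun p => by
      rw [Real.norm_eq_abs, abs_of_nonneg (hJ_nonneg _)]; exact hM _)
  have hGint : IntegrableOn (fun x => ∫ y in Ωnl, J (x - y) * (v y - v x) ^ 2) Ωnl volume :=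
    hFprod.integral_prod_left
  have hFx : ∀ x, IntegrableOn (fun y => J (x - y) * (v y - v x) ^ 2) Ωnl volume := by
    intro x
    have hsq : IntegrableOn (fun y => (v y - v x) ^ 2) Ωnl volume :=
      aux_int_sq hvi hv2i hΩfin (v x)
    exact hsq.bdd_mul
      ((hJ_int.comp_sub_left x).aestronglyMeasurable.mono_ac
        (Measure.absolutelyContinuous_of_le Measure.restrict_le_self))
      (c := M) (ae_of_all _ fun y => by rw [Real.norm_eq_abs, abs_of_nonneg (hJ_nonneg _)]; exact hM _)
  -- energy lower bound over a good pair of cover elements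
  have hGP : ∀ t ∈ T, ∀ s ∈ T, (∀ x ∈ U t, ∀ y ∈ U s, c ≤ J (x - y)) →
      c * (m s * Nq t + m t * Nq s - 2 * I t * I s) ≤ E := by
    intro t ht s hs hgood
    have stepA : ∀ x ∈ U t,
        c * ∫ y in U s, (v y - v x) ^ 2 ≤ ∫ y in Ωnl, J (x - y) * (v y - v x) ^ 2 := by
      intro x hx
      have h1 : c * ∫ y in U s, (v y - v x) ^ 2 = ∫ y in U s, c * (v y - v x) ^ 2 :=
        (integral_const_mul _ _).symm
      have h2 : ∫ y in U s, c * (v y - v x) ^ 2 ≤ ∫ y in U s, J (x - y) * (v y - v x) ^ 2 :=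
        setIntegral_mono_on ((aux_int_sq (hvU s) (hv2U s) (hUfin s) (v x)).const_mul c)
          ((hFx x).mono_set (hUsub s)) (hUmeas s)
          (fun y hy => mul_le_mul_of_nonneg_right (hgood x hx y hy) (sq_nonneg _))
      have h3 : ∫ y in U s, J (x - y) * (v y - v x) ^ 2 ≤
          ∫ y in Ωnl, J (x - y) * (v y - v x) ^ 2 :=
        setIntegral_mono_set (hFx x)
          (ae_of_all _ fun y => mul_nonneg (hJ_nonneg _) (sq_nonneg _))
          ((hUsub s).eventuallyLE)
      linarith
    have hLHSint : IntegrableOn (fun x => c * ∫ y in U s, (v y - v x) ^ 2) (U t) volume := by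
      have hpoly : IntegrableOn (fun x => c * ((∫ y in U s, v y ^ 2) +
          (-2 * ∫ y in U s, v y) * v x + (volume (U s)).toReal * v x ^ 2)) (U t) volume :=
        (((integrableOn_const (hUfin t)).add
          ((hvU t).const_mul _)).add ((hv2U t).const_mul _)).const_mul c
      exact hpoly.congr (ae_of_all _ fun x => by
        dsimp only
        rw [aux_inner (hvU s) (hv2U s) (hUfin s) (v x)])
    have stepB : ∫ x in U t, (c * ∫ y in U s, (v y - v x) ^ 2) ≤
        ∫ x in U t, ∫ y in Ωnl, J (x - y) * (v y - v x) ^ 2 :=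
      setIntegral_mono_on hLHSint (hGint.mono_set (hUsub t)) (hUmeas t) stepA
    have stepC : ∫ x in U t, ∫ y in Ωnl, J (x - y) * (v y - v x) ^ 2 ≤ E :=
      setIntegral_mono_set hGint (ae_of_all _ hG0) ((hUsub t).eventuallyLE)
    have expand : ∫ x in U t, ∫ y in U s, (v y - v x) ^ 2 =
        m s * Nq t + m t * Nq s - 2 * I t * I s := by
      rw [aux_expand (hvU t) (hv2U t) (hUfin t) (hvU s) (hv2U s) (hUfin s)]
    have heq : ∫ x in U t, (c * ∫ y in U s, (v y - v x) ^ 2) =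
        c * (m s * Nq t + m t * Nq s - 2 * I t * I s) := by
      rw [integral_const_mul, expand]
    linarith
  have hCS : ∀ t ∈ T, I t ^ 2 ≤ m t * Nq t := by
    intro t ht
    have hexp : ∫ x in U t, ∫ y in U t, (v y - v x) ^ 2 =
        m t * Nq t + m t * Nq t - 2 * I t * I t := by
      rw [aux_expand (hvU t) (hv2U t) (hUfin t) (hvU t) (hv2U t) (hUfin t)]
    have h0 : (0:ℝ) ≤ m t * Nq t + m t * Nq t - 2 * I t * I t := by
      rw [← hexp]
      exact integral_nonneg fun x => integral_nonneg fun y => sq_nonneg _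
    nlinarith [h0]
  have hEdge : ∀ t ∈ T, ∀ s ∈ T, (∃ x ∈ U t, ∃ y ∈ U s, dist x y < δ) →
      (a t - a s) ^ 2 ≤ E / (c * mmin ^ 2) := by
    intro t ht s hs hedge
    have hE1 : c * (m s * Nq t + m t * Nq s - 2 * I t * I s) ≤ E :=
      hGP t ht s hs (hgeom t s hedge)
    have hmt := hmpos t ht
    have hms := hmpos s hs
    have hCSt := hCS t ht
    have hCSs := hCS s hs
    have hat : a t = I t / m t := rfl
    have has : a s = I s / m s := rfl
    have key : c * (m t * m s) * (a t - a s) ^ 2 ≤ E := by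
      have e1 : m t * m s * (a t - a s) ^ 2 =
          m s * (I t ^ 2 / m t) + m t * (I s ^ 2 / m s) - 2 * I t * I s := by
        rw [hat, has]; field_simp; ring
      have e2 : I t ^ 2 / m t ≤ Nq t := (div_le_iff₀ hmt).2 (by nlinarith)
      have e3 : I s ^ 2 / m s ≤ Nq s := (div_le_iff₀ hms).2 (by nlinarith)
      have e4 : m t * m s * (a t - a s) ^ 2 ≤
          m s * Nq t + m t * Nq s - 2 * I t * I s := by
        rw [e1]
        have := mul_le_mul_of_nonneg_left e2 hms.le
        have := mul_le_mul_of_nonneg_left e3 hmt.le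
        linarith
      nlinarith [e4, hc.le]
    have hpos : (0:ℝ) < c * mmin ^ 2 := by positivity
    rw [le_div_iff₀ hpos]
    have hmm_t := hmmin_le t ht
    have hmm_s := hmmin_le s hs
    have h4 : mmin * mmin ≤ m t * m s :=
      mul_le_mul hmm_t hmm_s hmminpos.le (hmminpos.le.trans hmm_t)
    nlinarith [key, sq_nonneg (a t - a s),
      mul_nonneg (mul_nonneg hc.le (sq_nonneg (a t - a s))) (sub_nonneg.2 h4)]
  set q : ℝ := Real.sqrt (E / (c * mmin ^ 2)) with hq_def
  have hq0 : (0:ℝ) ≤ q := Real.sqrt_nonneg _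
  have hq2 : q ^ 2 = E / (c * mmin ^ 2) :=
    Real.sq_sqrt (div_nonneg hE0 (by positivity))
  have hEdge' : ∀ t ∈ T, ∀ s ∈ T, (∃ x ∈ U t, ∃ y ∈ U s, dist x y < δ) →
      |a t - a s| ≤ q := by
    intro t ht s hs he
    rw [hq_def, ← Real.sqrt_sq_eq_abs]
    exact Real.sqrt_le_sqrt (hEdge t ht s hs he)
  obtain ⟨t₀, ht₀⟩ := hTne
  set R : ℕ → Finset (EuclideanSpace ℝ (Fin N)) := fun k => Nat.rec {t₀}
    (fun _ Rk => Rk ∪ T.filter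
      (fun s => ∃ u ∈ Rk, ∃ p ∈ U u, ∃ y ∈ U s, dist p y < δ)) k with hR_def
  have hR0 : R 0 = {t₀} := rfl
  have hRsucc : ∀ k, R (k+1) = R k ∪ T.filter
      (fun s => ∃ u ∈ R k, ∃ p ∈ U u, ∃ y ∈ U s, dist p y < δ) := fun k => rfl
  have hRsubT : ∀ k, R k ⊆ T := by
    intro k; induction k with
    | zero => rw [hR0]; exact Finset.singleton_subset_iff.2 ht₀
    | succ k ih => rw [hRsucc]; exact Finset.union_subset ih (Finset.filter_subset _ _)
  have hRmono : ∀ k, R k ⊆ R (k+1) := fun k => by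
    rw [hRsucc]; exact Finset.subset_union_left
  have ht₀R : ∀ k, t₀ ∈ R k := by
    intro k; induction k with
    | zero => rw [hR0]; exact Finset.mem_singleton_self t₀
    | succ k ih => exact hRmono k ih
  have hbound : ∀ k, ∀ t ∈ R k, |a t - a t₀| ≤ k * q := by
    intro k; induction k with
    | zero =>
      intro t htR
      rw [hR0, Finset.mem_singleton] at htR
      subst htR
      simp
    | succ k ih =>
      intro t htR
      rw [hRsucc, Finset.mem_union] at htR
      rcases htR with h | h
      · have hk := ih t h
        have : (k:ℝ) * q ≤ (k+1 : ℕ) * q := by push_cast; nlinarith [hq0]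
        linarith
      · rw [Finset.mem_filter] at h
        obtain ⟨htT, u, huR, hedge⟩ := h
        have h1 : |a u - a t| ≤ q := hEdge' u (hRsubT k huR) t htT hedge
        have h2 := ih u huR
        have h3 : |a t - a t₀| ≤ |a t - a u| + |a u - a t₀| := abs_sub_le _ _ _
        rw [abs_sub_comm] at h1
        push_cast
        linarith
  have hstabone : ∀ k, R k = T → R (k+1) = T := fun k hk =>
    Finset.Subset.antisymm (hRsubT (k+1)) (hk ▸ hRmono k)
  have hstab : ∀ k, R (k+1) = R k → R k = T := by
    intro k hk
    by_contra hne
    have hex : ∃ s ∈ T, s ∉ R k := by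
      by_contra hall
      push_neg at hall
      exact hne (Finset.Subset.antisymm (hRsubT k) hall)
    obtain ⟨s0, hs0T, hs0R⟩ := hex
    apply hΩnl_conn
    refine ⟨⋃ u ∈ R k, U u, ⋃ s ∈ T.filter (fun s => s ∉ R k), U s,
      isOpen_biUnion fun u _ => hUopen u, isOpen_biUnion fun u _ => hUopen u,
      Set.nonempty_biUnion.2 ⟨t₀, ht₀R k, hUne t₀ ht₀⟩,
      Set.nonempty_biUnion.2 ⟨s0, Finset.mem_filter.2 ⟨hs0T, hs0R⟩, hUne s0 hs0T⟩,
      ?_, ?_, ?_⟩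
    · apply Set.Subset.antisymm
      · exact Set.union_subset (Set.iUnion₂_subset fun u _ => hUsub u)
          (Set.iUnion₂_subset fun u _ => hUsub u)
      · intro x hx
        have hx' := hx
        rw [hUcov] at hx'
        obtain ⟨t, htT, hxt⟩ := Set.mem_iUnion₂.1 hx'
        by_cases hmem : t ∈ R k
        · exact Or.inl (Set.mem_biUnion hmem hxt)
        · exact Or.inr (Set.mem_biUnion (Finset.mem_filter.2 ⟨htT, hmem⟩) hxt)
    · rw [Set.eq_empty_iff_forall_notMem]
      rintro z ⟨hz1, hz2⟩
      obtain ⟨u, huR, hzu⟩ := Set.mem_iUnion₂.1 hz1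
      obtain ⟨s, hsF, hzs⟩ := Set.mem_iUnion₂.1 hz2
      rw [Finset.mem_filter] at hsF
      apply hsF.2
      have : s ∈ R (k+1) := by
        rw [hRsucc, Finset.mem_union]
        exact Or.inr (Finset.mem_filter.2
          ⟨hsF.1, u, huR, z, hzu, z, hzs, by simpa using hδ⟩)
      rwa [hk] at this
    · intro x hx y hy
      obtain ⟨u, huR, hxu⟩ := Set.mem_iUnion₂.1 hx
      obtain ⟨s, hsF, hys⟩ := Set.mem_iUnion₂.1 hy
      rw [Finset.mem_filter] at hsF
      by_contra hlt
      push_neg at hlt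
      apply hsF.2
      have : s ∈ R (k+1) := by
        rw [hRsucc, Finset.mem_union]
        exact Or.inr (Finset.mem_filter.2 ⟨hsF.1, u, huR, x, hxu, y, hys, hlt⟩)
      rwa [hk] at this
  have hfull : R T.card = T := by
    by_contra hne
    have hne' : ∀ k < T.card, R k ≠ R (k+1) := by
      intro k hk hEq
      have hT : R k = T := hstab k hEq.symm
      have hall : ∀ j, R (k + j) = T := by
        intro j; induction j with
        | zero => exact hT
        | succ j ih => exact hstabone _ ih
      have := hall (T.card - k)
      rw [Nat.add_sub_cancel' hk.le] at this
      exact hne this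
    have hcard : ∀ k ≤ T.card, k + 1 ≤ (R k).card := by
      intro k
      induction k with
      | zero => intro _; exact Finset.card_pos.2 ⟨t₀, ht₀R 0⟩
      | succ k ih =>
        intro hk
        have h1 := ih (Nat.le_of_succ_le hk)
        have hss : R k ⊂ R (k+1) := (Finset.ssubset_iff_of_subset (hRmono k)).2 (by
          rcases Finset.exists_of_ssubset ((hRmono k).ssubset_of_ne
            (hne' k hk)) with ⟨x, hx1, hx2⟩
          exact ⟨x, hx1, hx2⟩)
        have := Finset.card_lt_card hss
        omega
    have h1 := hcard T.card le_rfl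
    have h2 := Finset.card_le_card (hRsubT T.card)
    omega
  have hA : ∀ t ∈ T, |a t - a t₀| ≤ (T.card : ℝ) * q := fun t ht =>
    hbound T.card t (by rwa [hfull])
  -- final assembly
  have step1 : ∫ x in Ωnl, v x ^ 2 ≤ ∫ x in Ωnl, (v x - a t₀) ^ 2 := by
    rw [aux_inner hvi hv2i hΩfin (a t₀), hmean]
    have h1 : (0:ℝ) ≤ (volume Ωnl).toReal * (a t₀) ^ 2 := by positivity
    linarith
  have step2 : ∫ x in Ωnl, (v x - a t₀) ^ 2 ≤ ∑ t ∈ T, ∫ x in U t, (v x - a t₀) ^ 2 := by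
    have hgi : IntegrableOn (fun x => (v x - a t₀) ^ 2) (⋃ t ∈ T, U t) volume := by
      rw [← hUcov]; exact aux_int_sq hvi hv2i hΩfin _
    have h := aux_cover T U hUmeas (fun x => sq_nonneg (v x - a t₀)) hgi
    calc ∫ x in Ωnl, (v x - a t₀) ^ 2 = ∫ x in ⋃ t ∈ T, U t, (v x - a t₀) ^ 2 := by
          rw [← hUcov]
      _ ≤ ∑ t ∈ T, ∫ x in U t, (v x - a t₀) ^ 2 := h
  have step3 : ∀ t ∈ T, ∫ x in U t, (v x - a t₀) ^ 2 ≤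
      (1 / (c * m t) + 2 * m t * (T.card : ℝ) ^ 2 / (c * mmin ^ 2)) * E := by
    intro t ht
    have hmt := hmpos t ht
    have hat : a t = I t / m t := rfl
    have hvar : ∫ x in U t, (v x - a t) ^ 2 =
        Nq t + -2 * I t * a t + m t * a t ^ 2 := by
      rw [aux_inner (hvU t) (hv2U t) (hUfin t) (a t)]
    have hGPt : c * (m t * Nq t + m t * Nq t - 2 * I t * I t) ≤ E :=
      hGP t ht t ht (hgeom1 t)
    have hvar_le : ∫ x in U t, (v x - a t) ^ 2 ≤ E / (2 * c * m t) := by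
      rw [hvar, hat]
      rw [le_div_iff₀ (by positivity : (0:ℝ) < 2 * c * m t)]
      have expand : (Nq t + -2 * I t * (I t / m t) + m t * (I t / m t) ^ 2) *
          (2 * c * m t) = 2 * c * (m t * Nq t - I t ^ 2) := by
        field_simp
        ring
      rw [expand]
      nlinarith [hGPt]
    have hat2 : (a t - a t₀) ^ 2 ≤ (T.card : ℝ) ^ 2 * (E / (c * mmin ^ 2)) := by
      have h1 := hA t ht
      have h2 : |a t - a t₀| ^ 2 ≤ ((T.card : ℝ) * q) ^ 2 :=
        pow_le_pow_left₀ (abs_nonneg _) h1 2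
      rw [sq_abs] at h2
      calc (a t - a t₀) ^ 2 ≤ ((T.card : ℝ) * q) ^ 2 := h2
        _ = (T.card : ℝ) ^ 2 * (E / (c * mmin ^ 2)) := by rw [mul_pow, hq2]
    have hpt : ∀ x ∈ U t, (v x - a t₀) ^ 2 ≤
        2 * (v x - a t) ^ 2 + 2 * (a t - a t₀) ^ 2 := fun x _ => by
      nlinarith [sq_nonneg (v x - 2 * a t + a t₀)]
    have hint : ∫ x in U t, (v x - a t₀) ^ 2 ≤
        ∫ x in U t, (2 * (v x - a t) ^ 2 + 2 * (a t - a t₀) ^ 2) :=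
      setIntegral_mono_on (aux_int_sq (hvU t) (hv2U t) (hUfin t) _)
        (((aux_int_sq (hvU t) (hv2U t) (hUfin t) _).const_mul 2).add
          (integrableOn_const (hUfin t))) (hUmeas t) hpt
    have hint2 : ∫ x in U t, (2 * (v x - a t) ^ 2 + 2 * (a t - a t₀) ^ 2) =
        2 * (∫ x in U t, (v x - a t) ^ 2) + m t * (2 * (a t - a t₀) ^ 2) := by
      rw [integral_add ((aux_int_sq (hvU t) (hv2U t) (hUfin t) _).const_mul 2)
        (integrableOn_const (hUfin t)),
        integral_const_mul, setIntegral_const, smul_eq_mul, measureReal_def]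
    have hmono2 : m t * (2 * (a t - a t₀) ^ 2) ≤
        m t * (2 * ((T.card : ℝ) ^ 2 * (E / (c * mmin ^ 2)))) :=
      mul_le_mul_of_nonneg_left (by linarith [hat2]) hmt.le
    have teq : (1 / (c * m t) + 2 * m t * (T.card : ℝ) ^ 2 / (c * mmin ^ 2)) * E =
        2 * (E / (2 * c * m t)) +
          m t * (2 * ((T.card : ℝ) ^ 2 * (E / (c * mmin ^ 2)))) := by
      ring
    rw [teq]
    linarith
  have hsum : ∑ t ∈ T, ∫ x in U t, (v x - a t₀) ^ 2 ≤ C * E := by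
    rw [hC_def, Finset.sum_mul]
    exact Finset.sum_le_sum step3
  linarith
end

section
/- Assume Ω_{nℓ} ⊆ ℝ^N is open, bounded and δ-connected and that J satisfies (J1) and (J2). Let h : ℝ^N → ℝ be a continuous function with h ≥ 0 on Ω_{nℓ}, and suppose there is a measurable set B ⊆ Ω_{nℓ} of positive Lebesgue measure on which h > 0. Then there exists a constant C > 0, depending only on Ω_{nℓ}, B, h and J, such that for every v ∈ L²(Ω_{nℓ}): ‖v‖²_{L²(Ω_{nℓ})} ≤ C ( ∫_{Ω_{nℓ}} h(x) v(x)² dx + ∫_{Ω_{nℓ}} ∫_{Ω_{nℓ}} J(x−y) (v(y) − v(x))² dy dx ). -/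
open MeasureTheory Metric
open scoped ENNReal NNReal

set_option maxHeartbeats 2000000 in
/-- Nonlocal Poincaré-type inequality with a zeroth order weight `h` which is positive on a
set of positive measure. -/
theorem nonlocal_poincare_with_weight {N : ℕ} (δ : ℝ) (hδ : 0 < δ)
    (Ωnl : Set (EuclideanSpace ℝ (Fin N)))
    (hΩnl_open : IsOpen Ωnl) (hΩnl_bdd : Bornology.IsBounded Ωnl)
    (hΩnl_conn : DeltaConnected δ Ωnl)
    (J : EuclideanSpace ℝ (Fin N) → ℝ)
    (hJ_nonneg : ∀ z, 0 ≤ J z)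
    (hJ_symm : ∀ z, J (-z) = J z)
    (hJ_bdd : ∃ M : ℝ, ∀ z, J z ≤ M)
    (hJ_int : Integrable J)
    (hJ1 : ∃ c > (0 : ℝ), ∀ z, ‖z‖ ≤ 2 * δ → c ≤ J z)
    (hJ2 : ∃ K : Lp ℝ 2 (volume.restrict Ωnl) →L[ℝ] Lp ℝ 2 (volume.restrict Ωnl),
      IsCompactOperator K ∧ ∀ w : Lp ℝ 2 (volume.restrict Ωnl),
        ∀ᵐ x ∂(volume.restrict Ωnl), K w x = ∫ y in Ωnl, J (x - y) * w y)
    (h : EuclideanSpace ℝ (Fin N) → ℝ)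
    (hh_cont : Continuous h)
    (hh_nonneg : ∀ x ∈ Ωnl, 0 ≤ h x)
    (B : Set (EuclideanSpace ℝ (Fin N)))
    (hB_sub : B ⊆ Ωnl) (hB_meas : MeasurableSet B) (hB_pos : 0 < volume B)
    (hh_pos : ∀ x ∈ B, 0 < h x) :
    ∃ C > (0 : ℝ), ∀ v : EuclideanSpace ℝ (Fin N) → ℝ,
      MemLp v 2 (volume.restrict Ωnl) →
      ∫ x in Ωnl, (v x) ^ 2 ≤
        C * ((∫ x in Ωnl, h x * (v x) ^ 2) +
          ∫ x in Ωnl, ∫ y in Ωnl, J (x - y) * (v y - v x) ^ 2) := by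
  classical
  obtain ⟨c0, hc0, hJc⟩ := hJ1
  obtain ⟨M, hJM⟩ := hJ_bdd
  have hM0 : 0 ≤ M := le_trans (hJ_nonneg 0) (hJM 0)
  set r : ℝ := δ / 4 with hr_def
  have hr0 : 0 < r := by positivity
  have hΩmeas : MeasurableSet Ωnl := hΩnl_open.measurableSet
  have hμΩfin : volume Ωnl < ⊤ :=
    lt_of_le_of_lt (measure_mono subset_closure) hΩnl_bdd.isCompact_closure.measure_lt_top
  -- square inequality
  have hsq : ∀ a b : ℝ, a ^ 2 ≤ 2 * (a - b) ^ 2 + 2 * b ^ 2 := by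
    intro a b; nlinarith [sq_nonneg (a - 2 * b)]
  -- measurable representative of J
  have hJsm := hJ_int.1
  set J' : (EuclideanSpace ℝ (Fin N)) → ℝ := hJsm.mk J with hJ'def
  have hJ'm : Measurable J' := hJsm.stronglyMeasurable_mk.measurable
  have hJJ' : J =ᵐ[volume] J' := hJsm.ae_eq_mk
  have hJ'ae : ∀ x : (EuclideanSpace ℝ (Fin N)), ∀ᵐ y ∂(volume : Measure (EuclideanSpace ℝ (Fin N))), J' (x - y) = J (x - y) := by
    intro x
    have hmp : MeasurePreserving (fun y : (EuclideanSpace ℝ (Fin N)) => x - y) volume volume :=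
      MeasureTheory.Measure.measurePreserving_sub_left volume x
    have := hmp.quasiMeasurePreserving.ae_eq_comp (hJJ'.symm)
    exact this
  -- basic quantities
  set Qv : ((EuclideanSpace ℝ (Fin N)) → ℝ) → ℝ≥0∞ := fun v => ∫⁻ x in Ωnl, ENNReal.ofReal (v x ^ 2) with hQvdef
  set Hq : ((EuclideanSpace ℝ (Fin N)) → ℝ) → ℝ≥0∞ := fun v => ∫⁻ x in Ωnl, ENNReal.ofReal (h x * v x ^ 2) with hHqdef
  set Eq2 : ((EuclideanSpace ℝ (Fin N)) → ℝ) → ℝ≥0∞ := fun v =>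
    ∫⁻ x in Ωnl, ∫⁻ y in Ωnl, ENNReal.ofReal (J' (x - y) * (v y - v x) ^ 2) with hEq2def
  have c'0 : (ENNReal.ofReal c0) ≠ 0 := (ENNReal.ofReal_pos.2 hc0).ne'
  have c't : (ENNReal.ofReal c0) ≠ ⊤ := ENNReal.ofReal_ne_top
  have c'it : (ENNReal.ofReal c0)⁻¹ ≠ ⊤ := ENNReal.inv_ne_top.2 c'0
  -- measurability of the inner nonlocal integral
  have inner_meas : ∀ v : (EuclideanSpace ℝ (Fin N)) → ℝ, Measurable v →
      Measurable (fun x => ∫⁻ y in Ωnl, ENNReal.ofReal (J' (x - y) * (v y - v x) ^ 2)) := by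
    intro v hv
    apply Measurable.lintegral_prod_right
    apply Measurable.ennreal_ofReal
    exact (hJ'm.comp (measurable_fst.sub measurable_snd)).mul
      (((hv.comp measurable_snd).sub (hv.comp measurable_fst)).pow_const 2)
  -- division helper
  have hdiv : ∀ a b Z : ℝ≥0∞, a ≠ 0 → a ≠ ⊤ → a * b ≤ Z → b ≤ a⁻¹ * Z := by
    intro a b Z h0 ht hab
    calc b = a⁻¹ * (a * b) := by rw [← mul_assoc, ENNReal.inv_mul_cancel h0 ht, one_mul]
      _ ≤ a⁻¹ * Z := mul_le_mul_right hab _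
  -- KEY two-set estimate
  have hkey : ∀ S T : Set (EuclideanSpace ℝ (Fin N)), MeasurableSet S → MeasurableSet T → S ⊆ Ωnl → T ⊆ Ωnl →
      (∀ x ∈ S, ∀ y ∈ T, ‖x - y‖ ≤ 2 * δ) → ∀ v : (EuclideanSpace ℝ (Fin N)) → ℝ, Measurable v →
      volume T * ∫⁻ x in S, ENNReal.ofReal (v x ^ 2) ≤
        2 * (ENNReal.ofReal c0)⁻¹ * Eq2 v +
          2 * volume S * ∫⁻ y in T, ENNReal.ofReal (v y ^ 2) := by
    intro S T hSm hTm hSΩ hTΩ hST v hv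
    have hTfin : volume T ≠ ⊤ := (lt_of_le_of_lt (measure_mono hTΩ) hμΩfin).ne
    set IT := ∫⁻ y in T, ENNReal.ofReal (v y ^ 2) with hITdef
    have step1 : ∀ x ∈ S, volume T * ENNReal.ofReal (v x ^ 2) ≤
        2 * (ENNReal.ofReal c0)⁻¹ *
          (∫⁻ y in Ωnl, ENNReal.ofReal (J' (x - y) * (v y - v x) ^ 2)) + 2 * IT := by
      intro x hx
      have e1 : volume T * ENNReal.ofReal (v x ^ 2) = ∫⁻ _ in T, ENNReal.ofReal (v x ^ 2) := by
        rw [setLIntegral_const, mul_comm]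
      have e2 : (∫⁻ _ in T, ENNReal.ofReal (v x ^ 2)) ≤
          ∫⁻ y in T, (2 * ENNReal.ofReal ((v x - v y) ^ 2) + 2 * ENNReal.ofReal (v y ^ 2)) := by
        refine lintegral_mono fun y => ?_
        calc ENNReal.ofReal (v x ^ 2)
            ≤ ENNReal.ofReal (2 * (v x - v y) ^ 2 + 2 * v y ^ 2) :=
              ENNReal.ofReal_le_ofReal (hsq _ _)
          _ = 2 * ENNReal.ofReal ((v x - v y) ^ 2) + 2 * ENNReal.ofReal (v y ^ 2) := by
              rw [ENNReal.ofReal_add (by positivity) (by positivity),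
                ENNReal.ofReal_mul (by norm_num), ENNReal.ofReal_mul (by norm_num)]
              norm_num
      have e3 : (∫⁻ y in T, (2 * ENNReal.ofReal ((v x - v y) ^ 2) + 2 * ENNReal.ofReal (v y ^ 2)))
          = 2 * (∫⁻ y in T, ENNReal.ofReal ((v x - v y) ^ 2)) + 2 * IT := by
        rw [lintegral_add_left (by fun_prop : Measurable fun y => 2 * ENNReal.ofReal ((v x - v y) ^ 2)),
          lintegral_const_mul' _ _ (by norm_num), lintegral_const_mul' _ _ (by norm_num)]
      have e4 : (∫⁻ y in T, ENNReal.ofReal ((v x - v y) ^ 2)) ≤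
          (ENNReal.ofReal c0)⁻¹ *
            ∫⁻ y in Ωnl, ENNReal.ofReal (J' (x - y) * (v y - v x) ^ 2) := by
        have h5 : ∀ᵐ y ∂(volume.restrict T), ENNReal.ofReal ((v x - v y) ^ 2) ≤
            (ENNReal.ofReal c0)⁻¹ * ENNReal.ofReal (J' (x - y) * (v y - v x) ^ 2) := by
          filter_upwards [ae_restrict_of_ae (hJ'ae x), ae_restrict_mem hTm] with y hy hyT
          have hJcx : c0 ≤ J (x - y) := hJc _ (hST x hx y hyT)
          calc ENNReal.ofReal ((v x - v y) ^ 2)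
              = (ENNReal.ofReal c0)⁻¹ * (ENNReal.ofReal c0 * ENNReal.ofReal ((v x - v y) ^ 2)) := by
                rw [← mul_assoc, ENNReal.inv_mul_cancel c'0 c't, one_mul]
            _ = (ENNReal.ofReal c0)⁻¹ * ENNReal.ofReal (c0 * (v x - v y) ^ 2) := by
                rw [ENNReal.ofReal_mul hc0.le]
            _ ≤ (ENNReal.ofReal c0)⁻¹ * ENNReal.ofReal (J' (x - y) * (v y - v x) ^ 2) := by
                refine mul_le_mul_right (ENNReal.ofReal_le_ofReal ?_) _
                rw [hy, show (v y - v x) ^ 2 = (v x - v y) ^ 2 by ring]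
                exact mul_le_mul_of_nonneg_right hJcx (sq_nonneg _)
        calc (∫⁻ y in T, ENNReal.ofReal ((v x - v y) ^ 2))
            ≤ ∫⁻ y in T, (ENNReal.ofReal c0)⁻¹ *
                ENNReal.ofReal (J' (x - y) * (v y - v x) ^ 2) := lintegral_mono_ae h5
          _ = (ENNReal.ofReal c0)⁻¹ *
                ∫⁻ y in T, ENNReal.ofReal (J' (x - y) * (v y - v x) ^ 2) :=
              lintegral_const_mul' _ _ c'it
          _ ≤ (ENNReal.ofReal c0)⁻¹ *
                ∫⁻ y in Ωnl, ENNReal.ofReal (J' (x - y) * (v y - v x) ^ 2) :=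
              mul_le_mul_right (lintegral_mono' (Measure.restrict_mono hTΩ le_rfl) le_rfl) _
      calc volume T * ENNReal.ofReal (v x ^ 2)
          ≤ 2 * (∫⁻ y in T, ENNReal.ofReal ((v x - v y) ^ 2)) + 2 * IT := by
            rw [e1]; exact e2.trans (le_of_eq e3)
        _ ≤ 2 * ((ENNReal.ofReal c0)⁻¹ *
              ∫⁻ y in Ωnl, ENNReal.ofReal (J' (x - y) * (v y - v x) ^ 2)) + 2 * IT := by
            gcongr
        _ = 2 * (ENNReal.ofReal c0)⁻¹ *
              (∫⁻ y in Ωnl, ENNReal.ofReal (J' (x - y) * (v y - v x) ^ 2)) + 2 * IT := by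
            rw [mul_assoc]
    calc volume T * ∫⁻ x in S, ENNReal.ofReal (v x ^ 2)
        = ∫⁻ x in S, volume T * ENNReal.ofReal (v x ^ 2) :=
          (lintegral_const_mul' _ _ hTfin).symm
      _ ≤ ∫⁻ x in S, (2 * (ENNReal.ofReal c0)⁻¹ *
            (∫⁻ y in Ωnl, ENNReal.ofReal (J' (x - y) * (v y - v x) ^ 2)) + 2 * IT) :=
          setLIntegral_mono' hSm step1
      _ = 2 * (ENNReal.ofReal c0)⁻¹ *
            (∫⁻ x in S, ∫⁻ y in Ωnl, ENNReal.ofReal (J' (x - y) * (v y - v x) ^ 2)) +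
            (2 * IT) * volume S := by
          rw [lintegral_add_left ((inner_meas v hv).const_mul _),
            lintegral_const_mul' _ _ (ENNReal.mul_ne_top (by norm_num) c'it),
            setLIntegral_const]
      _ ≤ 2 * (ENNReal.ofReal c0)⁻¹ * Eq2 v + 2 * volume S * IT := by
          refine add_le_add (mul_le_mul_right
            (lintegral_mono' (Measure.restrict_mono hSΩ le_rfl) le_rfl) _) (le_of_eq ?_)
          ring
  -- the covering
  have htb : TotallyBounded Ωnl :=
    hΩnl_bdd.isCompact_closure.totallyBounded.subset subset_closure
  obtain ⟨t, hts, htfin, htcov⟩ :=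
    totallyBounded_iff_subset.1 htb {p : (EuclideanSpace ℝ (Fin N)) × (EuclideanSpace ℝ (Fin N)) | dist p.1 p.2 < r} (dist_mem_uniformity hr0)
  have htcov' : Ωnl ⊆ ⋃ z ∈ t, ball z r := by
    intro x hx
    obtain ⟨z, hz, hxz⟩ := Set.mem_iUnion₂.1 (htcov hx)
    exact Set.mem_iUnion₂.2 ⟨z, hz, mem_ball.2 hxz⟩
  -- the pieces
  set AA : (EuclideanSpace ℝ (Fin N)) → Set (EuclideanSpace ℝ (Fin N)) := fun z => ball z r ∩ Ωnl with hAAdef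
  have hAmeas : ∀ z, MeasurableSet (AA z) := fun z => measurableSet_ball.inter hΩmeas
  have hA_sub : ∀ z, AA z ⊆ Ωnl := fun z => Set.inter_subset_right
  have hA_pos : ∀ z ∈ t, 0 < volume (AA z) := fun z hz =>
    (isOpen_ball.inter hΩnl_open).measure_pos volume ⟨z, mem_ball_self hr0, hts hz⟩
  have hA_fin : ∀ z, volume (AA z) ≠ ⊤ := fun z =>
    (lt_of_le_of_lt (measure_mono (hA_sub z)) hμΩfin).ne
  -- choice of ε and the base set
  have hεex : ∃ n : ℕ, 0 < volume (B ∩ {x | 1 / (n + 1 : ℝ) ≤ h x}) := by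
    by_contra hcon
    push_neg at hcon
    have hsub : B ⊆ ⋃ n : ℕ, (B ∩ {x | 1 / (n + 1 : ℝ) ≤ h x}) := by
      intro x hx
      obtain ⟨n, hn⟩ := exists_nat_one_div_lt (hh_pos x hx)
      exact Set.mem_iUnion.2 ⟨n, hx, le_of_lt hn⟩
    have : volume B ≤ ∑' n : ℕ, volume (B ∩ {x | 1 / (n + 1 : ℝ) ≤ h x}) :=
      le_trans (measure_mono hsub) (measure_iUnion_le _)
    simp only [le_antisymm (hcon _) zero_le, tsum_zero, nonpos_iff_eq_zero] at this
    exact hB_pos.ne' this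
  obtain ⟨nε, hnε⟩ := hεex
  set ε : ℝ := 1 / (nε + 1 : ℝ) with hεdef
  have hε0 : 0 < ε := by positivity
  set Bε : Set (EuclideanSpace ℝ (Fin N)) := B ∩ {x | ε ≤ h x} with hBεdef
  have hBεmeas : MeasurableSet Bε :=
    hB_meas.inter (measurableSet_le measurable_const hh_cont.measurable)
  have hBεΩ : Bε ⊆ Ωnl := fun x hx => hB_sub hx.1
  -- base ball
  have hbase_ex : ∃ z₀ ∈ t, 0 < volume (Bε ∩ ball z₀ r) := by
    by_contra hcon
    push_neg at hcon
    have hsub : Bε ⊆ ⋃ z ∈ t, (Bε ∩ ball z r) := by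
      intro x hx
      obtain ⟨z, hz, hxz⟩ := Set.mem_iUnion₂.1 (htcov' (hBεΩ hx))
      exact Set.mem_iUnion₂.2 ⟨z, hz, hx, hxz⟩
    have hnull : volume (⋃ z ∈ t, (Bε ∩ ball z r)) = 0 :=
      (measure_biUnion_null_iff htfin.countable).2 fun z hz =>
        le_antisymm (hcon z hz) zero_le
    exact hnε.ne' (le_antisymm (le_trans (measure_mono hsub) (le_of_eq hnull)) zero_le)
  obtain ⟨z₀, hz₀t, hz₀⟩ := hbase_ex
  -- "Good" predicate
  set Good : (EuclideanSpace ℝ (Fin N)) → Prop := fun z => ∃ C : ℝ≥0∞, C ≠ ⊤ ∧ ∀ v : (EuclideanSpace ℝ (Fin N)) → ℝ, Measurable v →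
    (∫⁻ x in AA z, ENNReal.ofReal (v x ^ 2)) ≤ C * (Eq2 v + Hq v) with hGooddef
  -- bound combination helper
  have hcomb : ∀ a b E H : ℝ≥0∞, a * E + b * H ≤ (a + b) * (E + H) := by
    intro a b E H
    rw [add_mul]
    exact add_le_add (mul_le_mul_right le_self_add _) (mul_le_mul_right le_add_self _)
  -- base case
  have hbase : Good z₀ := by
    set T : Set (EuclideanSpace ℝ (Fin N)) := Bε ∩ ball z₀ r with hTdef
    have hTm : MeasurableSet T := hBεmeas.inter measurableSet_ball
    have hTΩ : T ⊆ Ωnl := fun y hy => hBεΩ hy.1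
    have hTfin : volume T ≠ ⊤ := (lt_of_le_of_lt (measure_mono hTΩ) hμΩfin).ne
    have hnorm : ∀ x ∈ AA z₀, ∀ y ∈ T, ‖x - y‖ ≤ 2 * δ := by
      intro x hx y hy
      have h1 : dist x z₀ < r := mem_ball.1 hx.1
      have h2 : dist y z₀ < r := mem_ball.1 hy.2
      have : dist x y ≤ dist x z₀ + dist z₀ y := dist_triangle _ _ _
      rw [dist_comm z₀ y] at this
      rw [← dist_eq_norm]
      have hrδ : r = δ / 4 := hr_def
      linarith
    refine ⟨(volume T)⁻¹ * (2 * (ENNReal.ofReal c0)⁻¹ +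
      2 * volume (AA z₀) * (ENNReal.ofReal ε)⁻¹), ?_, ?_⟩
    · refine ENNReal.mul_ne_top (ENNReal.inv_ne_top.2 hz₀.ne') ?_
      exact ENNReal.add_ne_top.2 ⟨ENNReal.mul_ne_top (by norm_num) c'it,
        ENNReal.mul_ne_top (ENNReal.mul_ne_top (by norm_num) (hA_fin z₀))
          (ENNReal.inv_ne_top.2 (ENNReal.ofReal_pos.2 hε0).ne')⟩
    · intro v hv
      have hIT : (∫⁻ y in T, ENNReal.ofReal (v y ^ 2)) ≤ (ENNReal.ofReal ε)⁻¹ * Hq v := by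
        have hptw : ∀ y ∈ T, ENNReal.ofReal (v y ^ 2) ≤
            (ENNReal.ofReal ε)⁻¹ * ENNReal.ofReal (h y * v y ^ 2) := by
          intro y hy
          have hεh : ε ≤ h y := hy.1.2
          calc ENNReal.ofReal (v y ^ 2)
              = (ENNReal.ofReal ε)⁻¹ * (ENNReal.ofReal ε * ENNReal.ofReal (v y ^ 2)) := by
                rw [← mul_assoc, ENNReal.inv_mul_cancel (ENNReal.ofReal_pos.2 hε0).ne'
                  ENNReal.ofReal_ne_top, one_mul]
            _ = (ENNReal.ofReal ε)⁻¹ * ENNReal.ofReal (ε * v y ^ 2) := by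
                rw [ENNReal.ofReal_mul hε0.le]
            _ ≤ (ENNReal.ofReal ε)⁻¹ * ENNReal.ofReal (h y * v y ^ 2) :=
                mul_le_mul_right (ENNReal.ofReal_le_ofReal
                  (mul_le_mul_of_nonneg_right hεh (sq_nonneg _))) _
        calc (∫⁻ y in T, ENNReal.ofReal (v y ^ 2))
            ≤ ∫⁻ y in T, (ENNReal.ofReal ε)⁻¹ * ENNReal.ofReal (h y * v y ^ 2) :=
              setLIntegral_mono' hTm hptw
          _ = (ENNReal.ofReal ε)⁻¹ * ∫⁻ y in T, ENNReal.ofReal (h y * v y ^ 2) :=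
              lintegral_const_mul' _ _ (ENNReal.inv_ne_top.2 (ENNReal.ofReal_pos.2 hε0).ne')
          _ ≤ (ENNReal.ofReal ε)⁻¹ * Hq v :=
              mul_le_mul_right (lintegral_mono' (Measure.restrict_mono hTΩ le_rfl) le_rfl) _
      have hk := hkey (AA z₀) T (hAmeas z₀) hTm (hA_sub z₀) hTΩ hnorm v hv
      have hk2 : volume T * ∫⁻ x in AA z₀, ENNReal.ofReal (v x ^ 2) ≤
          (2 * (ENNReal.ofReal c0)⁻¹ + 2 * volume (AA z₀) * (ENNReal.ofReal ε)⁻¹) *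
            (Eq2 v + Hq v) := by
        refine le_trans hk (le_trans ?_ (hcomb _ _ _ _))
        refine add_le_add le_rfl ?_
        calc 2 * volume (AA z₀) * (∫⁻ y in T, ENNReal.ofReal (v y ^ 2))
            ≤ 2 * volume (AA z₀) * ((ENNReal.ofReal ε)⁻¹ * Hq v) := mul_le_mul_right hIT _
          _ = 2 * volume (AA z₀) * (ENNReal.ofReal ε)⁻¹ * Hq v := by ring
      have := hdiv _ _ _ hz₀.ne' hTfin hk2
      rwa [← mul_assoc] at this
  -- edge propagation
  have hedge : ∀ b z : (EuclideanSpace ℝ (Fin N)), b ∈ t → dist b z ≤ 3 * δ / 2 → Good b → Good z := by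
    intro b z hbt hbz ⟨C0, hC0t, hC0le⟩
    have hnorm : ∀ x ∈ AA z, ∀ y ∈ AA b, ‖x - y‖ ≤ 2 * δ := by
      intro x hx y hy
      have h1 : dist x z < r := mem_ball.1 hx.1
      have h2 : dist y b < r := mem_ball.1 hy.1
      have h3 : dist x y ≤ dist x z + dist z b + dist b y := dist_triangle4 _ _ _ _
      rw [dist_comm z b, dist_comm b y] at h3
      rw [← dist_eq_norm]
      have hrδ : r = δ / 4 := hr_def
      linarith
    refine ⟨(volume (AA b))⁻¹ * (2 * (ENNReal.ofReal c0)⁻¹ + 2 * volume (AA z) * C0), ?_, ?_⟩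
    · refine ENNReal.mul_ne_top (ENNReal.inv_ne_top.2 (hA_pos b hbt).ne') ?_
      exact ENNReal.add_ne_top.2 ⟨ENNReal.mul_ne_top (by norm_num) c'it,
        ENNReal.mul_ne_top (ENNReal.mul_ne_top (by norm_num) (hA_fin z)) hC0t⟩
    · intro v hv
      have hk := hkey (AA z) (AA b) (hAmeas z) (hAmeas b) (hA_sub z) (hA_sub b) hnorm v hv
      have hk2 : volume (AA b) * ∫⁻ x in AA z, ENNReal.ofReal (v x ^ 2) ≤
          (2 * (ENNReal.ofReal c0)⁻¹ + 2 * volume (AA z) * C0) * (Eq2 v + Hq v) := by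
        refine le_trans hk ?_
        calc 2 * (ENNReal.ofReal c0)⁻¹ * Eq2 v +
              2 * volume (AA z) * (∫⁻ y in AA b, ENNReal.ofReal (v y ^ 2))
            ≤ 2 * (ENNReal.ofReal c0)⁻¹ * Eq2 v +
              2 * volume (AA z) * (C0 * (Eq2 v + Hq v)) := by
              exact add_le_add le_rfl (mul_le_mul_right (hC0le v hv) _)
          _ = 2 * (ENNReal.ofReal c0)⁻¹ * Eq2 v +
              (2 * volume (AA z) * C0) * (Eq2 v + Hq v) := by ring
          _ ≤ 2 * (ENNReal.ofReal c0)⁻¹ * (Eq2 v + Hq v) +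
              (2 * volume (AA z) * C0) * (Eq2 v + Hq v) := by
              exact add_le_add (mul_le_mul_right le_self_add _) le_rfl
          _ = (2 * (ENNReal.ofReal c0)⁻¹ + 2 * volume (AA z) * C0) * (Eq2 v + Hq v) := by
              rw [add_mul]
      have := hdiv _ _ _ (hA_pos b hbt).ne' (hA_fin b) hk2
      rwa [← mul_assoc] at this
  -- connectivity: every center is reachable from z₀
  set adj : (EuclideanSpace ℝ (Fin N)) → (EuclideanSpace ℝ (Fin N)) → Prop := fun a b => a ∈ t ∧ b ∈ t ∧ dist a b ≤ 3 * δ / 2 with hadjdef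
  have hreach : ∀ z ∈ t, Relation.ReflTransGen adj z₀ z := by
    by_contra hcon
    push_neg at hcon
    obtain ⟨z₁, hz₁t, hz₁⟩ := hcon
    apply hΩnl_conn
    refine ⟨Ωnl ∩ ⋃ z ∈ {z | z ∈ t ∧ Relation.ReflTransGen adj z₀ z}, ball z r,
            Ωnl ∩ ⋃ z ∈ {z | z ∈ t ∧ ¬ Relation.ReflTransGen adj z₀ z}, ball z r,
            hΩnl_open.inter (isOpen_biUnion fun _ _ => isOpen_ball),
            hΩnl_open.inter (isOpen_biUnion fun _ _ => isOpen_ball),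
            ⟨z₀, hts hz₀t, Set.mem_iUnion₂.2 ⟨z₀, ⟨hz₀t, Relation.ReflTransGen.refl⟩,
              mem_ball_self hr0⟩⟩,
            ⟨z₁, hts hz₁t, Set.mem_iUnion₂.2 ⟨z₁, ⟨hz₁t, hz₁⟩, mem_ball_self hr0⟩⟩,
            ?_, ?_, ?_⟩
    · -- union
      apply Set.Subset.antisymm
      · exact Set.union_subset Set.inter_subset_left Set.inter_subset_left
      · intro x hx
        obtain ⟨z, hzt, hxz⟩ := Set.mem_iUnion₂.1 (htcov' hx)
        by_cases hz : Relation.ReflTransGen adj z₀ z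
        · exact Or.inl ⟨hx, Set.mem_iUnion₂.2 ⟨z, ⟨hzt, hz⟩, hxz⟩⟩
        · exact Or.inr ⟨hx, Set.mem_iUnion₂.2 ⟨z, ⟨hzt, hz⟩, hxz⟩⟩
    · -- disjoint
      rw [Set.eq_empty_iff_forall_notMem]
      rintro x ⟨⟨hxΩ, hx1⟩, ⟨_, hx2⟩⟩
      obtain ⟨a, ⟨hat, har⟩, hxa⟩ := Set.mem_iUnion₂.1 hx1
      obtain ⟨b, ⟨hbt, hbr⟩, hxb⟩ := Set.mem_iUnion₂.1 hx2
      have hab : ¬ dist a b ≤ 3 * δ / 2 := fun hle => hbr (har.tail ⟨hat, hbt, hle⟩)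
      push_neg at hab
      have h1 : dist x a < r := mem_ball.1 hxa
      have h2 : dist x b < r := mem_ball.1 hxb
      have : dist a b ≤ dist a x + dist x b := dist_triangle _ _ _
      rw [dist_comm a x] at this
      have hrδ : r = δ / 4 := hr_def
      linarith
    · -- distance
      rintro x ⟨_, hx1⟩ y ⟨_, hy2⟩
      obtain ⟨a, ⟨hat, har⟩, hxa⟩ := Set.mem_iUnion₂.1 hx1
      obtain ⟨b, ⟨hbt, hbr⟩, hyb⟩ := Set.mem_iUnion₂.1 hy2
      have hab : ¬ dist a b ≤ 3 * δ / 2 := fun hle => hbr (har.tail ⟨hat, hbt, hle⟩)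
      push_neg at hab
      have h1 : dist x a < r := mem_ball.1 hxa
      have h2 : dist y b < r := mem_ball.1 hyb
      have h3 : dist a b ≤ dist a x + dist x y + dist y b := dist_triangle4 _ _ _ _
      rw [dist_comm a x] at h3
      have hrδ : r = δ / 4 := hr_def
      linarith
  -- all pieces are good
  have hGoodAll : ∀ z ∈ t, Good z := by
    intro z hz
    induction hreach z hz with
    | refl => exact hbase
    | tail _ hbc ih => exact hedge _ _ hbc.1 hbc.2.2 (ih hbc.1)
  choose! Cg hCgne hCgle using hGoodAll
  set tF := htfin.toFinset with htFdef
  set Ctot : ℝ≥0∞ := ∑ z ∈ tF, Cg z with hCtotdef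
  have hCtotne : Ctot ≠ ⊤ := by
    refine (ENNReal.sum_lt_top.2 fun z hz => ?_).ne
    exact lt_top_iff_ne_top.2 (hCgne z (htfin.mem_toFinset.1 hz))
  -- main lintegral bound
  have hQle : ∀ v : (EuclideanSpace ℝ (Fin N)) → ℝ, Measurable v → Qv v ≤ Ctot * (Eq2 v + Hq v) := by
    intro v hv
    have hcover : Ωnl ⊆ ⋃ z ∈ tF, AA z := by
      intro x hx
      obtain ⟨z, hz, hxz⟩ := Set.mem_iUnion₂.1 (htcov' hx)
      exact Set.mem_iUnion₂.2 ⟨z, htfin.mem_toFinset.2 hz, hxz, hx⟩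
    have hsubadd : ∀ s : Finset (EuclideanSpace ℝ (Fin N)), (∫⁻ x in ⋃ z ∈ s, AA z, ENNReal.ofReal (v x ^ 2)) ≤
        ∑ z ∈ s, ∫⁻ x in AA z, ENNReal.ofReal (v x ^ 2) := by
      intro s
      induction s using Finset.induction with
      | empty => simp
      | @insert a s hna ih =>
        rw [Finset.set_biUnion_insert, Finset.sum_insert hna]
        exact le_trans (lintegral_union_le _ _ _) (add_le_add le_rfl ih)
    calc Qv v ≤ ∫⁻ x in ⋃ z ∈ tF, AA z, ENNReal.ofReal (v x ^ 2) :=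
          lintegral_mono' (Measure.restrict_mono hcover le_rfl) le_rfl
      _ ≤ ∑ z ∈ tF, ∫⁻ x in AA z, ENNReal.ofReal (v x ^ 2) := hsubadd tF
      _ ≤ ∑ z ∈ tF, Cg z * (Eq2 v + Hq v) :=
          Finset.sum_le_sum fun z hz => hCgle z (htfin.mem_toFinset.1 hz) v hv
      _ = Ctot * (Eq2 v + Hq v) := (Finset.sum_mul _ _ _).symm
  -- bound for h on Ωnl
  obtain ⟨Ch, hCh⟩ :=
    hΩnl_bdd.isCompact_closure.exists_bound_of_continuousOn hh_cont.continuousOn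
  -- THE CONSTANT
  refine ⟨Ctot.toReal + 1, by positivity, ?_⟩
  intro v hvℒ
  -- replace v by a measurable representative
  set u : (EuclideanSpace ℝ (Fin N)) → ℝ := hvℒ.1.mk v with hudef
  have hu_meas : Measurable u := hvℒ.1.stronglyMeasurable_mk.measurable
  have hvu : v =ᵐ[volume.restrict Ωnl] u := hvℒ.1.ae_eq_mk
  have hu2 : MemLp u 2 (volume.restrict Ωnl) := hvℒ.ae_eq hvu
  have hgoal1 : ∫ x in Ωnl, v x ^ 2 = ∫ x in Ωnl, u x ^ 2 :=
    integral_congr_ae (hvu.mono fun x hx => by show v x ^ 2 = u x ^ 2; rw [hx])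
  have hgoal2 : ∫ x in Ωnl, h x * v x ^ 2 = ∫ x in Ωnl, h x * u x ^ 2 :=
    integral_congr_ae (hvu.mono fun x hx => by show h x * v x ^ 2 = h x * u x ^ 2; rw [hx])
  have hgoal3 : (∫ x in Ωnl, ∫ y in Ωnl, J (x - y) * (v y - v x) ^ 2) =
      ∫ x in Ωnl, ∫ y in Ωnl, J (x - y) * (u y - u x) ^ 2 := by
    refine integral_congr_ae (hvu.mono fun x hx => ?_)
    show (∫ y in Ωnl, J (x - y) * (v y - v x) ^ 2) = ∫ y in Ωnl, J (x - y) * (u y - u x) ^ 2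
    exact integral_congr_ae (hvu.mono fun y hy =>
      by show J (x - y) * (v y - v x) ^ 2 = J (x - y) * (u y - u x) ^ 2; rw [hx, hy])
  rw [hgoal1, hgoal2, hgoal3]
  -- finiteness facts
  have hQufin : Qv u ≠ ⊤ := by
    have hint := hu2.integrable_sq
    have heq : Qv u = ∫⁻ x in Ωnl, (‖u x ^ 2‖₊ : ℝ≥0∞) :=
      lintegral_congr fun x => (Real.enorm_eq_ofReal (sq_nonneg _)).symm
    rw [heq]
    exact hint.2.ne
  have hCh0 : 0 ≤ Ch := by
    obtain ⟨x0, hx0⟩ : Ωnl.Nonempty := by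
      rcases Set.eq_empty_or_nonempty Ωnl with hE | hNE
      · exfalso
        have : B = ∅ := Set.subset_eq_empty hB_sub hE
        rw [this] at hB_pos; simp at hB_pos
      · exact hNE
    exact le_trans (norm_nonneg _) (hCh x0 (subset_closure hx0))
  have hHqfin : Hq u ≠ ⊤ := by
    have hb : Hq u ≤ ENNReal.ofReal Ch * Qv u := by
      have : Hq u ≤ ∫⁻ x in Ωnl, ENNReal.ofReal Ch * ENNReal.ofReal (u x ^ 2) := by
        refine setLIntegral_mono' hΩmeas fun x hx => ?_
        rw [← ENNReal.ofReal_mul hCh0]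
        refine ENNReal.ofReal_le_ofReal (mul_le_mul_of_nonneg_right ?_ (sq_nonneg _))
        exact le_trans (le_abs_self _) (hCh x (subset_closure hx))
      rwa [lintegral_const_mul' _ _ ENNReal.ofReal_ne_top] at this
    exact (lt_of_le_of_lt hb (ENNReal.mul_lt_top ENNReal.ofReal_lt_top
      (lt_top_iff_ne_top.2 hQufin))).ne
  -- inner integrals with J vs J'
  have hinner_eq : ∀ x : (EuclideanSpace ℝ (Fin N)),
      (∫⁻ y in Ωnl, ENNReal.ofReal (J' (x - y) * (u y - u x) ^ 2)) =
      ∫⁻ y in Ωnl, ENNReal.ofReal (J (x - y) * (u y - u x) ^ 2) := fun x =>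
    lintegral_congr_ae ((ae_restrict_of_ae (hJ'ae x)).mono fun y hy => by
      show ENNReal.ofReal (J' (x - y) * (u y - u x) ^ 2) =
        ENNReal.ofReal (J (x - y) * (u y - u x) ^ 2)
      rw [hy])
  have hEq2fin : Eq2 u ≠ ⊤ := by
    have hb : ∀ x : (EuclideanSpace ℝ (Fin N)), (∫⁻ y in Ωnl, ENNReal.ofReal (J' (x - y) * (u y - u x) ^ 2)) ≤
        ENNReal.ofReal (2 * M) * Qv u +
          volume Ωnl * (ENNReal.ofReal (2 * M) * ENNReal.ofReal (u x ^ 2)) := by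
      intro x
      rw [hinner_eq x]
      have hptw : ∀ y : (EuclideanSpace ℝ (Fin N)), ENNReal.ofReal (J (x - y) * (u y - u x) ^ 2) ≤
          ENNReal.ofReal (2 * M) * ENNReal.ofReal (u y ^ 2) +
            ENNReal.ofReal (2 * M) * ENNReal.ofReal (u x ^ 2) := by
        intro y
        rw [← ENNReal.ofReal_mul (by positivity), ← ENNReal.ofReal_mul (by positivity),
          ← ENNReal.ofReal_add (by positivity) (by positivity)]
        refine ENNReal.ofReal_le_ofReal ?_
        have h1 : (u y - u x) ^ 2 ≤ 2 * u y ^ 2 + 2 * u x ^ 2 := by nlinarith [sq_nonneg (u y + u x)]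
        have h2 : J (x - y) * (u y - u x) ^ 2 ≤ M * (u y - u x) ^ 2 :=
          mul_le_mul_of_nonneg_right (hJM _) (sq_nonneg _)
        nlinarith [hJ_nonneg (x - y), sq_nonneg (u y - u x)]
      calc (∫⁻ y in Ωnl, ENNReal.ofReal (J (x - y) * (u y - u x) ^ 2))
          ≤ ∫⁻ y in Ωnl, (ENNReal.ofReal (2 * M) * ENNReal.ofReal (u y ^ 2) +
              ENNReal.ofReal (2 * M) * ENNReal.ofReal (u x ^ 2)) :=
            lintegral_mono fun y => hptw y
        _ = ENNReal.ofReal (2 * M) * Qv u +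
              (ENNReal.ofReal (2 * M) * ENNReal.ofReal (u x ^ 2)) * volume Ωnl := by
            rw [lintegral_add_left (((hu_meas.pow_const 2).ennreal_ofReal).const_mul _),
              lintegral_const_mul' _ _ ENNReal.ofReal_ne_top, setLIntegral_const]
        _ = ENNReal.ofReal (2 * M) * Qv u +
              volume Ωnl * (ENNReal.ofReal (2 * M) * ENNReal.ofReal (u x ^ 2)) := by ring
    have hb2 : Eq2 u ≤ (∫⁻ _x in Ωnl, ENNReal.ofReal (2 * M) * Qv u) +
        ∫⁻ x in Ωnl, volume Ωnl * (ENNReal.ofReal (2 * M) * ENNReal.ofReal (u x ^ 2)) := by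
      refine le_trans (lintegral_mono fun x => hb x) (le_of_eq ?_)
      rw [lintegral_add_left measurable_const]
    have hfin1 : (∫⁻ _x in Ωnl, (ENNReal.ofReal (2 * M) * Qv u) : ℝ≥0∞) ≠ ⊤ := by
      rw [setLIntegral_const]
      exact ENNReal.mul_ne_top (ENNReal.mul_ne_top ENNReal.ofReal_ne_top hQufin) hμΩfin.ne
    have hfin2 : (∫⁻ x in Ωnl, volume Ωnl * (ENNReal.ofReal (2 * M) *
        ENNReal.ofReal (u x ^ 2))) ≠ ⊤ := by
      rw [lintegral_const_mul' _ _ hμΩfin.ne, lintegral_const_mul' _ _ ENNReal.ofReal_ne_top]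
      exact ENNReal.mul_ne_top hμΩfin.ne (ENNReal.mul_ne_top ENNReal.ofReal_ne_top hQufin)
    exact (lt_of_le_of_lt hb2 (lt_top_iff_ne_top.2 (ENNReal.add_ne_top.2 ⟨hfin1, hfin2⟩))).ne
  -- conversions between Bochner and lower integrals
  have hL : ∫ x in Ωnl, u x ^ 2 = (Qv u).toReal := by
    rw [integral_eq_lintegral_of_nonneg_ae (ae_of_all _ fun x => sq_nonneg (u x))
      ((hu_meas.pow_const 2).aestronglyMeasurable)]
  have hH : ∫ x in Ωnl, h x * u x ^ 2 = (Hq u).toReal := by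
    rw [integral_eq_lintegral_of_nonneg_ae]
    · exact (ae_restrict_iff' hΩmeas).2 (ae_of_all _ fun x hx =>
        mul_nonneg (hh_nonneg x hx) (sq_nonneg _))
    · exact (hh_cont.measurable.mul (hu_meas.pow_const 2)).aestronglyMeasurable
  have hD : (∫ x in Ωnl, ∫ y in Ωnl, J (x - y) * (u y - u x) ^ 2) = (Eq2 u).toReal := by
    have hinner_b : ∀ x : (EuclideanSpace ℝ (Fin N)), (∫ y in Ωnl, J (x - y) * (u y - u x) ^ 2) =
        (∫⁻ y in Ωnl, ENNReal.ofReal (J (x - y) * (u y - u x) ^ 2)).toReal := by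
      intro x
      have hmp : MeasurePreserving (fun y : (EuclideanSpace ℝ (Fin N)) => x - y) volume volume :=
        MeasureTheory.Measure.measurePreserving_sub_left volume x
      have hmeasx : AEStronglyMeasurable (fun y => J (x - y) * (u y - u x) ^ 2)
          (volume.restrict Ωnl) := by
        refine AEStronglyMeasurable.mul ?_
          (((hu_meas.sub measurable_const).pow_const 2).aestronglyMeasurable)
        exact ((hJ_int.1.comp_measurePreserving hmp).restrict)
      rw [integral_eq_lintegral_of_nonneg_ae
        (ae_of_all _ fun y => mul_nonneg (hJ_nonneg _) (sq_nonneg _)) hmeasx]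
    have hfin_inner : ∀ᵐ x ∂(volume.restrict Ωnl),
        (∫⁻ y in Ωnl, ENNReal.ofReal (J' (x - y) * (u y - u x) ^ 2)) ≠ ⊤ := by
      have := ae_lt_top (inner_meas u hu_meas) hEq2fin
      exact this.mono fun x hx => hx.ne
    calc (∫ x in Ωnl, ∫ y in Ωnl, J (x - y) * (u y - u x) ^ 2)
        = ∫ x in Ωnl,
            (∫⁻ y in Ωnl, ENNReal.ofReal (J' (x - y) * (u y - u x) ^ 2)).toReal := by
          refine integral_congr_ae (ae_of_all _ fun x => ?_)
          show (∫ y in Ωnl, J (x - y) * (u y - u x) ^ 2) =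
            (∫⁻ y in Ωnl, ENNReal.ofReal (J' (x - y) * (u y - u x) ^ 2)).toReal
          rw [hinner_b x, hinner_eq x]
      _ = (∫⁻ x in Ωnl, ENNReal.ofReal
            ((∫⁻ y in Ωnl, ENNReal.ofReal (J' (x - y) * (u y - u x) ^ 2)).toReal)).toReal := by
          rw [integral_eq_lintegral_of_nonneg_ae (ae_of_all _ fun x => ENNReal.toReal_nonneg)
            ((inner_meas u hu_meas).ennreal_toReal.aestronglyMeasurable)]
      _ = (Eq2 u).toReal := by
          congr 1
          exact lintegral_congr_ae (hfin_inner.mono fun x hx => ENNReal.ofReal_toReal hx)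
  rw [hL, hH, hD]
  -- final arithmetic
  have hmain := hQle u hu_meas
  have hRHSne : Ctot * (Eq2 u + Hq u) ≠ ⊤ :=
    ENNReal.mul_ne_top hCtotne (ENNReal.add_ne_top.2 ⟨hEq2fin, hHqfin⟩)
  have hmainR := ENNReal.toReal_mono hRHSne hmain
  rw [ENNReal.toReal_mul, ENNReal.toReal_add hEq2fin hHqfin] at hmainR
  have h1 : 0 ≤ (Hq u).toReal := ENNReal.toReal_nonneg
  have h2 : 0 ≤ (Eq2 u).toReal := ENNReal.toReal_nonneg
  have h3 : 0 ≤ Ctot.toReal := ENNReal.toReal_nonneg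
  nlinarith
end

section
/- Let Ω_ℓ and Ω_{nℓ} be disjoint open bounded subsets of ℝ^N with Ω_{nℓ} δ-connected and dist(Ω_ℓ, Ω_{nℓ}) < δ (condition (P1)), and let J satisfy (J1) and (J2). Then there exists a constant C > 0, depending only on Ω_ℓ, Ω_{nℓ} and J, such that whenever f ∈ L²(Ω_{nℓ}), u ∈ L²(Ω_ℓ) and v ∈ L²(Ω_{nℓ}) solves the nonlocal problem with data (f, u), one has ‖v‖_{L²(Ω_{nℓ})} ≤ C ( ‖f‖_{L²(Ω_{nℓ})} + ‖u‖_{L²(Ω_ℓ)} ). -/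
open MeasureTheory Metric

open Filter Set

namespace NLP


set_option maxHeartbeats 1000000



variable {N : ℕ}

lemma alpha_pos {δ c : ℝ} (hδ : 0 < δ) {J : EuclideanSpace ℝ (Fin N) → ℝ}
    (hJ_int : Integrable J) (hJ_nonneg : ∀ z, 0 ≤ J z) (hc : 0 < c)
    (hJc : ∀ z, ‖z‖ ≤ 2 * δ → c ≤ J z) : 0 < ∫ z, J z := by
  have h2δ : 0 < 2 * δ := by linarith
  have hb : 0 < volume (ball (0 : EuclideanSpace ℝ (Fin N)) (2 * δ)) :=
    measure_ball_pos _ _ h2δ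
  have hblt : volume (ball (0 : EuclideanSpace ℝ (Fin N)) (2 * δ)) < ⊤ := measure_ball_lt_top
  have h1 : (0 : ℝ) < c * (volume (ball (0 : EuclideanSpace ℝ (Fin N)) (2 * δ))).toReal := by
    have := ENNReal.toReal_pos hb.ne' hblt.ne
    positivity
  have h2 : c * (volume (ball (0 : EuclideanSpace ℝ (Fin N)) (2 * δ))).toReal
      = ∫ z in ball (0 : EuclideanSpace ℝ (Fin N)) (2 * δ), c := by
    rw [setIntegral_const, smul_eq_mul, mul_comm]
    rfl
  have h3 : ∫ z in ball (0 : EuclideanSpace ℝ (Fin N)) (2 * δ), c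
      ≤ ∫ z in ball (0 : EuclideanSpace ℝ (Fin N)) (2 * δ), J z := by
    refine setIntegral_mono_on (integrableOn_const hblt.ne) hJ_int.integrableOn
      measurableSet_ball ?_
    intro z hz
    exact hJc z (le_of_lt (by simpa [mem_ball_zero_iff] using hz))
  have h4 : ∫ z in ball (0 : EuclideanSpace ℝ (Fin N)) (2 * δ), J z ≤ ∫ z, J z :=
    setIntegral_le_integral hJ_int (ae_of_all _ hJ_nonneg)
  linarith

lemma conv_aesm {J : EuclideanSpace ℝ (Fin N) → ℝ} (hJm : AEStronglyMeasurable J volume)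
    {s t : Set (EuclideanSpace ℝ (Fin N))} {h : EuclideanSpace ℝ (Fin N) → ℝ}
    (hh : AEStronglyMeasurable h (volume.restrict s)) :
    AEStronglyMeasurable (fun x => ∫ y in s, J (x - y) * h y) (volume.restrict t) := by
  have h1 : AEStronglyMeasurable (fun z : EuclideanSpace ℝ (Fin N) × EuclideanSpace ℝ (Fin N) =>
      J (z.1 - z.2)) ((volume.restrict t).prod (volume.restrict s)) := by
    have h0 := hJm.comp_quasiMeasurePreserving
      (quasiMeasurePreserving_sub (volume : Measure (EuclideanSpace ℝ (Fin N))) volume)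
    have h2 := h0.restrict (s := t ×ˢ s)
    rw [← Measure.prod_restrict] at h2
    exact h2
  have h2 : AEStronglyMeasurable (fun z : EuclideanSpace ℝ (Fin N) × EuclideanSpace ℝ (Fin N) =>
      h z.2) ((volume.restrict t).prod (volume.restrict s)) :=
    hh.comp_quasiMeasurePreserving Measure.quasiMeasurePreserving_snd
  exact (h1.mul h2).integral_prod_right'

lemma conv_integrableOn {J : EuclideanSpace ℝ (Fin N) → ℝ} (hJ_int : Integrable J)
    (hJ_nonneg : ∀ z, 0 ≤ J z) {M : ℝ} (hM : ∀ z, J z ≤ M)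
    {s : Set (EuclideanSpace ℝ (Fin N))} {h : EuclideanSpace ℝ (Fin N) → ℝ}
    (hh : IntegrableOn h s volume) (x : EuclideanSpace ℝ (Fin N)) :
    IntegrableOn (fun y => J (x - y) * h y) s volume := by
  have hmeas : AEStronglyMeasurable (fun y => J (x - y) * h y) (volume.restrict s) :=
    ((hJ_int.comp_sub_left x).aestronglyMeasurable.restrict).mul hh.aestronglyMeasurable
  refine Integrable.mono' (hh.abs.const_mul M) hmeas (ae_of_all _ fun y => ?_)
  have h0 := hJ_nonneg (x - y)
  have h1 := hM (x - y)
  rw [Real.norm_eq_abs, abs_mul, abs_of_nonneg h0]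
  have : |h y| ≤ |h y| := le_rfl
  calc J (x - y) * |h y| ≤ M * |h y| := by
        apply mul_le_mul_of_nonneg_right h1 (abs_nonneg _)
  
lemma conv_le {J : EuclideanSpace ℝ (Fin N) → ℝ} (hJ_int : Integrable J)
    (hJ_nonneg : ∀ z, 0 ≤ J z) {M : ℝ} (hM : ∀ z, J z ≤ M)
    {s : Set (EuclideanSpace ℝ (Fin N))} {h : EuclideanSpace ℝ (Fin N) → ℝ}
    (hh : IntegrableOn h s volume) (x : EuclideanSpace ℝ (Fin N)) :
    |∫ y in s, J (x - y) * h y| ≤ M * ∫ y in s, |h y| := by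
  have hint := conv_integrableOn hJ_int hJ_nonneg hM hh x
  calc |∫ y in s, J (x - y) * h y| ≤ ∫ y in s, |J (x - y)| * |h y| := by
        simpa [Real.norm_eq_abs, abs_mul] using
          norm_integral_le_integral_norm (μ := volume.restrict s) (fun y => J (x - y) * h y)
    _ ≤ ∫ y in s, M * |h y| := by
        refine integral_mono_ae ?_ (hh.abs.const_mul M) (ae_of_all _ fun y => ?_)
        · simpa [abs_mul] using hint.abs
        · simp only []
          exact mul_le_mul_of_nonneg_right ((abs_of_nonneg (hJ_nonneg _)).le.trans
            ((abs_of_nonneg (hJ_nonneg _)) ▸ hM _)) (abs_nonneg _)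
    _ = M * ∫ y in s, |h y| := integral_const_mul _ _

lemma int_abs_le_norm {μ' : Measure (EuclideanSpace ℝ (Fin N))} [IsFiniteMeasure μ']
    (u : Lp ℝ 2 μ') :
    ∫ x, |(u : EuclideanSpace ℝ (Fin N) → ℝ) x| ∂μ'
      ≤ (μ' Set.univ).toReal ^ ((1:ℝ)/2) * ‖u‖ := by
  have hmem := Lp.memLp u
  have hint : Integrable (↑↑u : EuclideanSpace ℝ (Fin N) → ℝ) μ' :=
    hmem.integrable (by norm_num)
  have h1 : ∫ x, |(u : EuclideanSpace ℝ (Fin N) → ℝ) x| ∂μ'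
      = (eLpNorm (↑↑u : EuclideanSpace ℝ (Fin N) → ℝ) 1 μ').toReal := by
    rw [eLpNorm_one_eq_lintegral_enorm]
    simpa [Real.norm_eq_abs] using
      integral_norm_eq_lintegral_enorm hint.aestronglyMeasurable
  have h2 : eLpNorm (↑↑u : EuclideanSpace ℝ (Fin N) → ℝ) 1 μ'
      ≤ eLpNorm (↑↑u : EuclideanSpace ℝ (Fin N) → ℝ) 2 μ' * μ' Set.univ ^ ((1:ℝ)/1 - 1/2) :=
    eLpNorm_le_eLpNorm_mul_rpow_measure_univ (by norm_num) hint.aestronglyMeasurable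
  have hfin : eLpNorm (↑↑u : EuclideanSpace ℝ (Fin N) → ℝ) 2 μ' ≠ ⊤ := hmem.eLpNorm_ne_top
  have h3 : (eLpNorm (↑↑u : EuclideanSpace ℝ (Fin N) → ℝ) 1 μ').toReal
      ≤ (eLpNorm (↑↑u : EuclideanSpace ℝ (Fin N) → ℝ) 2 μ' * μ' Set.univ ^ ((1:ℝ)/1 - 1/2)).toReal := by
    refine ENNReal.toReal_mono ?_ h2
    exact ENNReal.mul_ne_top hfin (by
      refine (ENNReal.rpow_lt_top_of_nonneg (by norm_num) (measure_ne_top _ _)).ne)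
  rw [h1]
  refine h3.trans ?_
  rw [ENNReal.toReal_mul, ← ENNReal.toReal_rpow]
  rw [Lp.norm_def]
  norm_num
  rw [mul_comm]



variable {N : ℕ}


noncomputable def lamF (J : EuclideanSpace ℝ (Fin N) → ℝ) (Ω : Set (EuclideanSpace ℝ (Fin N)))
    (x : EuclideanSpace ℝ (Fin N)) : ℝ := ∫ y in Ωᶜ, J (x - y)

noncomputable def muF (J : EuclideanSpace ℝ (Fin N) → ℝ) (Ω : Set (EuclideanSpace ℝ (Fin N)))
    (x : EuclideanSpace ℝ (Fin N)) : ℝ := ∫ y in Ω, J (x - y)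

noncomputable def aF (J : EuclideanSpace ℝ (Fin N) → ℝ) (Ω : Set (EuclideanSpace ℝ (Fin N)))
    (x : EuclideanSpace ℝ (Fin N)) : ℝ := lamF J Ω x + 2 * muF J Ω x

variable {J : EuclideanSpace ℝ (Fin N) → ℝ} {Ω : Set (EuclideanSpace ℝ (Fin N))}

lemma lamF_nonneg (hJ_nonneg : ∀ z, 0 ≤ J z) (x : EuclideanSpace ℝ (Fin N)) :
    0 ≤ lamF J Ω x := integral_nonneg fun y => hJ_nonneg _

lemma muF_nonneg (hJ_nonneg : ∀ z, 0 ≤ J z) (x : EuclideanSpace ℝ (Fin N)) :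
    0 ≤ muF J Ω x := integral_nonneg fun y => hJ_nonneg _

lemma muF_le (hJ_int : Integrable J) (hJ_nonneg : ∀ z, 0 ≤ J z)
    (x : EuclideanSpace ℝ (Fin N)) : muF J Ω x ≤ ∫ z, J z := by
  have h := setIntegral_le_integral (s := Ω) (hJ_int.comp_sub_left x)
    (ae_of_all _ fun y => hJ_nonneg _)
  rwa [integral_sub_left_eq_self J volume x] at h

lemma lamF_le (hJ_int : Integrable J) (hJ_nonneg : ∀ z, 0 ≤ J z)
    (x : EuclideanSpace ℝ (Fin N)) : lamF J Ω x ≤ ∫ z, J z := by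
  have h := setIntegral_le_integral (s := Ωᶜ) (hJ_int.comp_sub_left x)
    (ae_of_all _ fun y => hJ_nonneg _)
  rwa [integral_sub_left_eq_self J volume x] at h

lemma muF_add_lamF (hΩ : MeasurableSet Ω) (hJ_int : Integrable J)
    (x : EuclideanSpace ℝ (Fin N)) : muF J Ω x + lamF J Ω x = ∫ z, J z := by
  have h := integral_add_compl hΩ (hJ_int.comp_sub_left x)
  rw [integral_sub_left_eq_self J volume x] at h
  exact h

lemma aF_ge (hΩ : MeasurableSet Ω) (hJ_int : Integrable J) (hJ_nonneg : ∀ z, 0 ≤ J z)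
    (x : EuclideanSpace ℝ (Fin N)) : (∫ z, J z) ≤ aF J Ω x := by
  have h1 := muF_add_lamF hΩ hJ_int (J := J) x
  have h2 := muF_nonneg (Ω := Ω) hJ_nonneg x
  unfold aF; linarith

lemma aF_le (hΩ : MeasurableSet Ω) (hJ_int : Integrable J) (hJ_nonneg : ∀ z, 0 ≤ J z)
    (x : EuclideanSpace ℝ (Fin N)) : aF J Ω x ≤ 2 * ∫ z, J z := by
  have h1 := muF_add_lamF hΩ hJ_int (J := J) x
  have h2 := muF_le (Ω := Ω) hJ_int hJ_nonneg x
  unfold aF; linarith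

lemma norm_sq_eq_integral {μ' : Measure (EuclideanSpace ℝ (Fin N))} (h : Lp ℝ 2 μ') :
    ‖h‖ ^ 2 = ∫ x, ((h : EuclideanSpace ℝ (Fin N) → ℝ) x) ^ 2 ∂μ' := by
  have h1 := real_inner_self_eq_norm_sq h
  rw [L2.inner_def (𝕜 := ℝ)] at h1
  rw [← h1]
  refine integral_congr_ae (Eventually.of_forall fun x => ?_)
  simp [RCLike.inner_apply, sq]

lemma mul_integrable {μ' : Measure (EuclideanSpace ℝ (Fin N))} (f g : Lp ℝ 2 μ') :
    Integrable (fun x => (f : EuclideanSpace ℝ (Fin N) → ℝ) x *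
      (g : EuclideanSpace ℝ (Fin N) → ℝ) x) μ' := by
  have := L2.integrable_inner (𝕜 := ℝ) g f
  simpa [RCLike.inner_apply] using this


lemma Jprod_aesm {J : EuclideanSpace ℝ (Fin N) → ℝ} (hJm : AEStronglyMeasurable J volume)
    (s t : Set (EuclideanSpace ℝ (Fin N))) :
    AEStronglyMeasurable (fun z : EuclideanSpace ℝ (Fin N) × EuclideanSpace ℝ (Fin N) =>
      J (z.1 - z.2)) ((volume.restrict t).prod (volume.restrict s)) := by
  have h0 := hJm.comp_quasiMeasurePreserving
    (quasiMeasurePreserving_sub (volume : Measure (EuclideanSpace ℝ (Fin N))) volume)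
  have h2 := h0.restrict (s := t ×ˢ s)
  rw [← Measure.prod_restrict] at h2
  exact h2

noncomputable def gU (J : EuclideanSpace ℝ (Fin N) → ℝ)
    (Ωl Ωnl : Set (EuclideanSpace ℝ (Fin N))) (u : EuclideanSpace ℝ (Fin N) → ℝ)
    (x : EuclideanSpace ℝ (Fin N)) : ℝ :=
  ∫ y in Ωnlᶜ, J (x - y) * Ωl.indicator u y

variable {Ωl Ωnl : Set (EuclideanSpace ℝ (Fin N))}

lemma gU_abs_le (hJ_int : Integrable J) (hJ_nonneg : ∀ z, 0 ≤ J z) {M : ℝ}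
    (hM : ∀ z, J z ≤ M) (hΩl : MeasurableSet Ωl) (hsub : Ωl ⊆ Ωnlᶜ)
    {u : EuclideanSpace ℝ (Fin N) → ℝ} (hu : IntegrableOn u Ωl volume)
    (x : EuclideanSpace ℝ (Fin N)) :
    |gU J Ωl Ωnl u x| ≤ M * ∫ y in Ωl, |u y| := by
  have hind : IntegrableOn (Ωl.indicator u) Ωnlᶜ volume :=
    ((integrable_indicator_iff hΩl).2 hu).integrableOn
  have h1 := conv_le hJ_int hJ_nonneg hM hind x
  refine h1.trans ?_
  have h2 : ∀ y, |Ωl.indicator u y| = Ωl.indicator (fun y => |u y|) y := by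
    intro y; by_cases h : y ∈ Ωl <;> simp [h]
  rw [integral_congr_ae (Eventually.of_forall fun y => h2 y),
    setIntegral_indicator hΩl, Set.inter_eq_right.mpr hsub]

lemma gU_memℒp (hJ_int : Integrable J) (hJ_nonneg : ∀ z, 0 ≤ J z) {M : ℝ}
    (hM : ∀ z, J z ≤ M) (hΩl : MeasurableSet Ωl) (hsub : Ωl ⊆ Ωnlᶜ)
    (hb : volume Ωnl ≠ ⊤)
    {u : EuclideanSpace ℝ (Fin N) → ℝ} (hu : IntegrableOn u Ωl volume)
    (hum : AEStronglyMeasurable u (volume.restrict Ωl)) :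
    MemLp (gU J Ωl Ωnl u) 2 (volume.restrict Ωnl) := by
  haveI : IsFiniteMeasure (volume.restrict Ωnl) :=
    ⟨by rw [Measure.restrict_apply_univ]; exact hb.lt_top⟩
  have hmeas : AEStronglyMeasurable (gU J Ωl Ωnl u) (volume.restrict Ωnl) :=
    conv_aesm hJ_int.aestronglyMeasurable
      (((aestronglyMeasurable_indicator_iff hΩl).2 hum).restrict)
  exact MemLp.of_bound hmeas (M * ∫ y in Ωl, |u y|)
    (ae_of_all _ fun x => by
      rw [Real.norm_eq_abs]; exact gU_abs_le hJ_int hJ_nonneg hM hΩl hsub hu x)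

lemma toLp_norm_le {μ' : Measure (EuclideanSpace ℝ (Fin N))} [IsFiniteMeasure μ']
    {g : EuclideanSpace ℝ (Fin N) → ℝ} (hg : MemLp g 2 μ') {C : ℝ} (hC : 0 ≤ C)
    (hball : ∀ x, |g x| ≤ C) :
    ‖hg.toLp g‖ ≤ (μ' Set.univ).toReal ^ ((1:ℝ)/2) * C := by
  rw [Lp.norm_toLp]
  have h := eLpNorm_le_of_ae_bound (p := 2) (μ := μ') (f := g) (C := C)
    (ae_of_all _ fun x => by rw [Real.norm_eq_abs]; exact hball x)
  have hfin : μ' Set.univ ^ (ENNReal.toReal 2)⁻¹ * ENNReal.ofReal C ≠ ⊤ :=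
    ENNReal.mul_ne_top
      (ENNReal.rpow_lt_top_of_nonneg (by norm_num) (measure_ne_top _ _)).ne
      ENNReal.ofReal_ne_top
  have h2 := ENNReal.toReal_mono hfin h
  refine h2.trans (le_of_eq ?_)
  rw [ENNReal.toReal_mul, ENNReal.toReal_ofReal hC, ← ENNReal.toReal_rpow]
  norm_num

lemma eqn_rewrite (hΩl : MeasurableSet Ωl) (hΩnl : MeasurableSet Ωnl)
    (hsub : Ωl ⊆ Ωnlᶜ) (hbnl : volume Ωnl ≠ ⊤) (hbl : volume Ωl ≠ ⊤)
    {J : EuclideanSpace ℝ (Fin N) → ℝ}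
    (hJ_int : Integrable J) (hJ_nonneg : ∀ z, 0 ≤ J z) {M : ℝ} (hM : ∀ z, J z ≤ M)
    (f v : Lp ℝ 2 (volume.restrict Ωnl)) (u : Lp ℝ 2 (volume.restrict Ωl))
    (kv : EuclideanSpace ℝ (Fin N) → ℝ)
    (hkv : ∀ᵐ x ∂(volume.restrict Ωnl), kv x = ∫ y in Ωnl, J (x - y) * v y)
    (heqn : ∀ᵐ x ∂(volume.restrict Ωnl),
      -f x = (∫ y in Ωnlᶜ, J (x - y) * (Set.indicator Ωl u y - v x)) +
        2 * ∫ y in Ωnl, J (x - y) * (v y - v x)) :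
    ∀ᵐ x ∂(volume.restrict Ωnl),
      aF J Ωnl x * v x = f x + gU J Ωl Ωnl u x + 2 * kv x := by
  haveI : IsFiniteMeasure (volume.restrict Ωnl) :=
    ⟨by rw [Measure.restrict_apply_univ]; exact hbnl.lt_top⟩
  haveI : IsFiniteMeasure (volume.restrict Ωl) :=
    ⟨by rw [Measure.restrict_apply_univ]; exact hbl.lt_top⟩
  have hu_int : IntegrableOn (↑↑u : EuclideanSpace ℝ (Fin N) → ℝ) Ωl volume :=
    (Lp.memLp u).integrable one_le_two
  have hv_int : IntegrableOn (↑↑v : EuclideanSpace ℝ (Fin N) → ℝ) Ωnl volume :=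
    (Lp.memLp v).integrable one_le_two
  have hind : IntegrableOn (Ωl.indicator (↑↑u : EuclideanSpace ℝ (Fin N) → ℝ)) Ωnlᶜ volume :=
    ((integrable_indicator_iff hΩl).2 hu_int).integrableOn
  filter_upwards [heqn, hkv] with x hx hkx
  have e1 : IntegrableOn (fun y => J (x - y) * Ωl.indicator (u : EuclideanSpace ℝ (Fin N) → ℝ) y) Ωnlᶜ volume :=
    conv_integrableOn hJ_int hJ_nonneg hM hind x
  have e2 : IntegrableOn (fun y => J (x - y) * (v : EuclideanSpace ℝ (Fin N) → ℝ) x) Ωnlᶜ volume :=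
    ((hJ_int.comp_sub_left x).integrableOn).mul_const _
  have e3 : IntegrableOn (fun y => J (x - y) * (v : EuclideanSpace ℝ (Fin N) → ℝ) y) Ωnl volume :=
    conv_integrableOn hJ_int hJ_nonneg hM hv_int x
  have e4 : IntegrableOn (fun y => J (x - y) * (v : EuclideanSpace ℝ (Fin N) → ℝ) x) Ωnl volume :=
    ((hJ_int.comp_sub_left x).integrableOn).mul_const _
  have h1 : (∫ y in Ωnlᶜ, J (x - y) * (Set.indicator Ωl (u : EuclideanSpace ℝ (Fin N) → ℝ) y - (v : EuclideanSpace ℝ (Fin N) → ℝ) x))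
      = gU J Ωl Ωnl (u : EuclideanSpace ℝ (Fin N) → ℝ) x - lamF J Ωnl x * (v : EuclideanSpace ℝ (Fin N) → ℝ) x := by
    have : (fun y => J (x - y) * (Set.indicator Ωl (u : EuclideanSpace ℝ (Fin N) → ℝ) y - (v : EuclideanSpace ℝ (Fin N) → ℝ) x))
        = fun y => J (x - y) * Set.indicator Ωl (u : EuclideanSpace ℝ (Fin N) → ℝ) y - J (x - y) * (v : EuclideanSpace ℝ (Fin N) → ℝ) x := by
      funext y; ring
    rw [this, integral_sub e1 e2, integral_mul_const]
    simp only [gU, lamF]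
  have h2 : (∫ y in Ωnl, J (x - y) * ((v : EuclideanSpace ℝ (Fin N) → ℝ) y - (v : EuclideanSpace ℝ (Fin N) → ℝ) x))
      = (∫ y in Ωnl, J (x - y) * (v : EuclideanSpace ℝ (Fin N) → ℝ) y) - muF J Ωnl x * (v : EuclideanSpace ℝ (Fin N) → ℝ) x := by
    have : (fun y => J (x - y) * ((v : EuclideanSpace ℝ (Fin N) → ℝ) y - (v : EuclideanSpace ℝ (Fin N) → ℝ) x))
        = fun y => J (x - y) * (v : EuclideanSpace ℝ (Fin N) → ℝ) y - J (x - y) * (v : EuclideanSpace ℝ (Fin N) → ℝ) x := by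
      funext y; ring
    rw [this, integral_sub e3 e4, integral_mul_const]
    simp only [muF]
  rw [h1, h2, ← hkx] at hx
  simp only [aF]
  linarith

lemma quad_form (hΩnl : MeasurableSet Ωnl) (hb : volume Ωnl ≠ ⊤)
    {J : EuclideanSpace ℝ (Fin N) → ℝ}
    (hJ_int : Integrable J) (hJ_nonneg : ∀ z, 0 ≤ J z) (hJ_symm : ∀ z, J (-z) = J z)
    {M : ℝ} (hM : ∀ z, J z ≤ M)
    (v : Lp ℝ 2 (volume.restrict Ωnl))
    (hid : ∀ᵐ x ∂(volume.restrict Ωnl),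
      aF J Ωnl x * (v : EuclideanSpace ℝ (Fin N) → ℝ) x
        = 2 * ∫ y in Ωnl, J (x - y) * (v : EuclideanSpace ℝ (Fin N) → ℝ) y) :
    (∀ᵐ x ∂(volume.restrict Ωnl),
      lamF J Ωnl x * ((v : EuclideanSpace ℝ (Fin N) → ℝ) x) ^ 2 = 0) ∧
    (∀ᵐ z : EuclideanSpace ℝ (Fin N) × EuclideanSpace ℝ (Fin N)
        ∂((volume.restrict Ωnl).prod (volume.restrict Ωnl)),
      J (z.1 - z.2) * ((v : EuclideanSpace ℝ (Fin N) → ℝ) z.1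
        - (v : EuclideanSpace ℝ (Fin N) → ℝ) z.2) ^ 2 = 0) := by
  haveI : IsFiniteMeasure (volume.restrict Ωnl) :=
    ⟨by rw [Measure.restrict_apply_univ]; exact hb.lt_top⟩
  set V : EuclideanSpace ℝ (Fin N) → ℝ := (v : EuclideanSpace ℝ (Fin N) → ℝ) with hV
  have hVm : AEStronglyMeasurable V (volume.restrict Ωnl) := Lp.aestronglyMeasurable v
  have hV2 : Integrable (fun x => V x ^ 2) (volume.restrict Ωnl) := (Lp.memLp v).integrable_sq
  have hV1 : Integrable V (volume.restrict Ωnl) := (Lp.memLp v).integrable one_le_two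
  have hVfst : AEStronglyMeasurable
      (fun z : EuclideanSpace ℝ (Fin N) × EuclideanSpace ℝ (Fin N) => V z.1)
      ((volume.restrict Ωnl).prod (volume.restrict Ωnl)) :=
    hVm.comp_quasiMeasurePreserving Measure.quasiMeasurePreserving_fst
  have hVsnd : AEStronglyMeasurable
      (fun z : EuclideanSpace ℝ (Fin N) × EuclideanSpace ℝ (Fin N) => V z.2)
      ((volume.restrict Ωnl).prod (volume.restrict Ωnl)) :=
    hVm.comp_quasiMeasurePreserving Measure.quasiMeasurePreserving_snd
  have hJp := Jprod_aesm hJ_int.aestronglyMeasurable Ωnl Ωnl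
  have hM0 : 0 ≤ M := le_trans (hJ_nonneg 0) (hM 0)
  have hT1 : Integrable (fun z : EuclideanSpace ℝ (Fin N) × EuclideanSpace ℝ (Fin N) =>
      J (z.1 - z.2) * V z.1 ^ 2) ((volume.restrict Ωnl).prod (volume.restrict Ωnl)) := by
    refine Integrable.mono' ((hV2.mul_prod (integrable_const (1:ℝ))).const_mul M)
      (hJp.mul ((continuous_pow 2).comp_aestronglyMeasurable hVfst))
      (ae_of_all _ fun z => ?_)
    rw [Real.norm_eq_abs, abs_mul, abs_of_nonneg (hJ_nonneg _), abs_of_nonneg (sq_nonneg _)]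
    calc J (z.1 - z.2) * V z.1 ^ 2 ≤ M * V z.1 ^ 2 :=
          mul_le_mul_of_nonneg_right (hM _) (sq_nonneg _)
      _ = M * (V z.1 ^ 2 * 1) := by ring
  have hT2 : Integrable (fun z : EuclideanSpace ℝ (Fin N) × EuclideanSpace ℝ (Fin N) =>
      J (z.1 - z.2) * V z.2 ^ 2) ((volume.restrict Ωnl).prod (volume.restrict Ωnl)) := by
    refine Integrable.mono' (((integrable_const (1:ℝ)).mul_prod hV2).const_mul M)
      (hJp.mul ((continuous_pow 2).comp_aestronglyMeasurable hVsnd))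
      (ae_of_all _ fun z => ?_)
    rw [Real.norm_eq_abs, abs_mul, abs_of_nonneg (hJ_nonneg _), abs_of_nonneg (sq_nonneg _)]
    calc J (z.1 - z.2) * V z.2 ^ 2 ≤ M * V z.2 ^ 2 :=
          mul_le_mul_of_nonneg_right (hM _) (sq_nonneg _)
      _ = M * (1 * V z.2 ^ 2) := by ring
  have hT3 : Integrable (fun z : EuclideanSpace ℝ (Fin N) × EuclideanSpace ℝ (Fin N) =>
      V z.1 * (J (z.1 - z.2) * V z.2)) ((volume.restrict Ωnl).prod (volume.restrict Ωnl)) := by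
    refine Integrable.mono' ((hV1.abs.mul_prod hV1.abs).const_mul M)
      (hVfst.mul (hJp.mul hVsnd)) (ae_of_all _ fun z => ?_)
    rw [Real.norm_eq_abs, abs_mul, abs_mul, abs_of_nonneg (hJ_nonneg _)]
    calc |V z.1| * (J (z.1 - z.2) * |V z.2|) ≤ |V z.1| * (M * |V z.2|) := by
          refine mul_le_mul_of_nonneg_left ?_ (abs_nonneg _)
          exact mul_le_mul_of_nonneg_right (hM _) (abs_nonneg _)
      _ = M * (|V z.1| * |V z.2|) := by ring
  have hPhi : Integrable (fun z : EuclideanSpace ℝ (Fin N) × EuclideanSpace ℝ (Fin N) =>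
      J (z.1 - z.2) * (V z.1 - V z.2) ^ 2) ((volume.restrict Ωnl).prod (volume.restrict Ωnl)) := by
    refine Integrable.mono'
      ((((hV2.mul_prod (integrable_const (1:ℝ))).const_mul 2).add
        (((integrable_const (1:ℝ)).mul_prod hV2).const_mul 2)).const_mul M)
      (hJp.mul ((continuous_pow 2).comp_aestronglyMeasurable (hVfst.sub hVsnd)))
      (ae_of_all _ fun z => ?_)
    rw [Real.norm_eq_abs, abs_mul, abs_of_nonneg (hJ_nonneg _), abs_of_nonneg (sq_nonneg _)]
    have h1 : (V z.1 - V z.2) ^ 2 ≤ 2 * (V z.1 ^ 2 * 1) + 2 * (1 * V z.2 ^ 2) := by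
      nlinarith [sq_nonneg (V z.1 + V z.2)]
    calc J (z.1 - z.2) * (V z.1 - V z.2) ^ 2 ≤ M * (V z.1 - V z.2) ^ 2 :=
          mul_le_mul_of_nonneg_right (hM _) (sq_nonneg _)
      _ ≤ M * (2 * (V z.1 ^ 2 * 1) + 2 * (1 * V z.2 ^ 2)) :=
          mul_le_mul_of_nonneg_left h1 hM0
  have hlam_aesm : AEStronglyMeasurable (lamF J Ωnl) (volume.restrict Ωnl) := by
    have := conv_aesm (t := Ωnl) (s := Ωnlᶜ) hJ_int.aestronglyMeasurable
      (aestronglyMeasurable_const (b := (1:ℝ)))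
    simp only [mul_one] at this
    exact this
  have hmu_aesm : AEStronglyMeasurable (muF J Ωnl) (volume.restrict Ωnl) := by
    have := conv_aesm (t := Ωnl) (s := Ωnl) hJ_int.aestronglyMeasurable
      (aestronglyMeasurable_const (b := (1:ℝ)))
    simp only [mul_one] at this
    exact this
  have hlamV2 : Integrable (fun x => lamF J Ωnl x * V x ^ 2) (volume.restrict Ωnl) :=
    Integrable.bdd_mul (c := ∫ z, J z) hV2 hlam_aesm (ae_of_all _ fun x => by
      rw [Real.norm_eq_abs, abs_of_nonneg (lamF_nonneg hJ_nonneg x)]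
      exact lamF_le hJ_int hJ_nonneg x)
  have hmuV2 : Integrable (fun x => muF J Ωnl x * V x ^ 2) (volume.restrict Ωnl) :=
    Integrable.bdd_mul (c := ∫ z, J z) hV2 hmu_aesm (ae_of_all _ fun x => by
      rw [Real.norm_eq_abs, abs_of_nonneg (muF_nonneg hJ_nonneg x)]
      exact muF_le hJ_int hJ_nonneg x)
  have he1 : (∫ z : EuclideanSpace ℝ (Fin N) × EuclideanSpace ℝ (Fin N),
      J (z.1 - z.2) * V z.1 ^ 2 ∂((volume.restrict Ωnl).prod (volume.restrict Ωnl)))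
      = ∫ x in Ωnl, muF J Ωnl x * V x ^ 2 := by
    rw [← integral_integral (f := fun x y => J (x - y) * V x ^ 2) hT1]
    refine integral_congr_ae (Eventually.of_forall fun x => ?_)
    show (∫ y in Ωnl, J (x - y) * V x ^ 2) = muF J Ωnl x * V x ^ 2
    rw [integral_mul_const]
    simp only [muF]
  have he2 : (∫ z : EuclideanSpace ℝ (Fin N) × EuclideanSpace ℝ (Fin N),
      J (z.1 - z.2) * V z.2 ^ 2 ∂((volume.restrict Ωnl).prod (volume.restrict Ωnl)))
      = ∫ x in Ωnl, muF J Ωnl x * V x ^ 2 := by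
    rw [integral_prod_symm _ hT2]
    refine integral_congr_ae (Eventually.of_forall fun y => ?_)
    show (∫ x in Ωnl, J (x - y) * V y ^ 2) = muF J Ωnl y * V y ^ 2
    have hsymm : ∀ x : EuclideanSpace ℝ (Fin N), J (x - y) = J (y - x) := fun x => by
      rw [← hJ_symm (y - x), neg_sub]
    simp only [hsymm]
    rw [integral_mul_const]
    simp only [muF]
  have he3 : (∫ z : EuclideanSpace ℝ (Fin N) × EuclideanSpace ℝ (Fin N),
      V z.1 * (J (z.1 - z.2) * V z.2) ∂((volume.restrict Ωnl).prod (volume.restrict Ωnl)))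
      = ∫ x in Ωnl, V x * ∫ y in Ωnl, J (x - y) * V y := by
    rw [← integral_integral (f := fun x y => V x * (J (x - y) * V y)) hT3]
    refine integral_congr_ae (Eventually.of_forall fun x => ?_)
    show (∫ y in Ωnl, V x * (J (x - y) * V y)) = V x * ∫ y in Ωnl, J (x - y) * V y
    rw [integral_const_mul]
  have hexp : (∫ x in Ωnl, aF J Ωnl x * V x ^ 2)
      = 2 * ∫ x in Ωnl, V x * ∫ y in Ωnl, J (x - y) * V y := by
    have hae : ∀ᵐ x ∂(volume.restrict Ωnl), aF J Ωnl x * V x ^ 2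
        = 2 * (V x * ∫ y in Ωnl, J (x - y) * V y) := by
      filter_upwards [hid] with x hx
      have h0 : aF J Ωnl x * V x ^ 2 = (aF J Ωnl x * V x) * V x := by ring
      rw [h0, hx]; ring
    rw [integral_congr_ae hae, integral_const_mul]
  have haV2 : (∫ x in Ωnl, aF J Ωnl x * V x ^ 2)
      = (∫ x in Ωnl, lamF J Ωnl x * V x ^ 2) + 2 * ∫ x in Ωnl, muF J Ωnl x * V x ^ 2 := by
    have h0 : (fun x => aF J Ωnl x * V x ^ 2)
        = fun x => lamF J Ωnl x * V x ^ 2 + 2 * (muF J Ωnl x * V x ^ 2) := by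
      funext x; simp only [aF]; ring
    rw [h0, integral_add hlamV2 (hmuV2.const_mul 2), integral_const_mul]
  have hPhiSplit : (∫ z : EuclideanSpace ℝ (Fin N) × EuclideanSpace ℝ (Fin N),
      J (z.1 - z.2) * (V z.1 - V z.2) ^ 2 ∂((volume.restrict Ωnl).prod (volume.restrict Ωnl)))
      = 2 * (∫ x in Ωnl, muF J Ωnl x * V x ^ 2)
        - 2 * ∫ x in Ωnl, V x * ∫ y in Ωnl, J (x - y) * V y := by
    have hpt : (fun z : EuclideanSpace ℝ (Fin N) × EuclideanSpace ℝ (Fin N) =>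
        J (z.1 - z.2) * (V z.1 - V z.2) ^ 2)
        = fun z => (J (z.1 - z.2) * V z.1 ^ 2 + J (z.1 - z.2) * V z.2 ^ 2)
          - 2 * (V z.1 * (J (z.1 - z.2) * V z.2)) := by
      funext z; ring
    have hT12 : Integrable (fun z : EuclideanSpace ℝ (Fin N) × EuclideanSpace ℝ (Fin N) =>
        J (z.1 - z.2) * V z.1 ^ 2 + J (z.1 - z.2) * V z.2 ^ 2)
        ((volume.restrict Ωnl).prod (volume.restrict Ωnl)) := hT1.add hT2
    have hT3' : Integrable (fun z : EuclideanSpace ℝ (Fin N) × EuclideanSpace ℝ (Fin N) =>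
        2 * (V z.1 * (J (z.1 - z.2) * V z.2)))
        ((volume.restrict Ωnl).prod (volume.restrict Ωnl)) := hT3.const_mul 2
    rw [hpt, integral_sub hT12 hT3', integral_add hT1 hT2,
      integral_const_mul, he1, he2, he3]
    ring
  have hsum : (∫ x in Ωnl, lamF J Ωnl x * V x ^ 2)
      + (∫ z : EuclideanSpace ℝ (Fin N) × EuclideanSpace ℝ (Fin N),
        J (z.1 - z.2) * (V z.1 - V z.2) ^ 2
          ∂((volume.restrict Ωnl).prod (volume.restrict Ωnl))) = 0 := by
    rw [hPhiSplit]
    linarith [haV2, hexp]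
  have hnn1 : 0 ≤ ∫ x in Ωnl, lamF J Ωnl x * V x ^ 2 :=
    integral_nonneg fun x => mul_nonneg (lamF_nonneg hJ_nonneg x) (sq_nonneg _)
  have hnn2 : 0 ≤ ∫ z : EuclideanSpace ℝ (Fin N) × EuclideanSpace ℝ (Fin N),
      J (z.1 - z.2) * (V z.1 - V z.2) ^ 2
        ∂((volume.restrict Ωnl).prod (volume.restrict Ωnl)) :=
    integral_nonneg fun z => mul_nonneg (hJ_nonneg _) (sq_nonneg _)
  have hz1 : (∫ x in Ωnl, lamF J Ωnl x * V x ^ 2) = 0 := by linarith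
  have hz2 : (∫ z : EuclideanSpace ℝ (Fin N) × EuclideanSpace ℝ (Fin N),
      J (z.1 - z.2) * (V z.1 - V z.2) ^ 2
        ∂((volume.restrict Ωnl).prod (volume.restrict Ωnl))) = 0 := by linarith
  constructor
  · have h4 := (integral_eq_zero_iff_of_nonneg
      (fun x => mul_nonneg (lamF_nonneg hJ_nonneg x) (sq_nonneg _)) hlamV2).1 hz1
    exact h4.mono fun x hx => by simpa using hx
  · have h5 := (integral_eq_zero_iff_of_nonneg
      (fun z => mul_nonneg (hJ_nonneg _) (sq_nonneg _)) hPhi).1 hz2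
    exact h5.mono fun z hz => by simpa using hz

lemma geometry {δ : ℝ} (hδ : 0 < δ) {Ωl Ωnl : Set (EuclideanSpace ℝ (Fin N))}
    (hΩl_open : IsOpen Ωl) (hΩnl_open : IsOpen Ωnl)
    (hdisj : Ωl ∩ Ωnl = ∅) (hconn : DeltaConnected δ Ωnl)
    (hP1 : ∃ x ∈ Ωl, ∃ y ∈ Ωnl, dist x y < δ)
    {J : EuclideanSpace ℝ (Fin N) → ℝ}
    (hJ_int : Integrable J) (hJ_nonneg : ∀ z, 0 ≤ J z)
    {c : ℝ} (hc : 0 < c) (hJc : ∀ z, ‖z‖ ≤ 2 * δ → c ≤ J z)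
    {V : EuclideanSpace ℝ (Fin N) → ℝ}
    (H1 : ∀ᵐ x ∂(volume.restrict Ωnl), lamF J Ωnl x * (V x) ^ 2 = 0)
    (H2 : ∀ᵐ z : EuclideanSpace ℝ (Fin N) × EuclideanSpace ℝ (Fin N)
      ∂((volume.restrict Ωnl).prod (volume.restrict Ωnl)),
      J (z.1 - z.2) * (V z.1 - V z.2) ^ 2 = 0) :
    ∀ᵐ x ∂(volume.restrict Ωnl), V x = 0 := by
  have hmΩnl : MeasurableSet Ωnl := hΩnl_open.measurableSet
  -- pairwise equality within distance 2δ
  have H2' : ∀ᵐ x ∂(volume.restrict Ωnl), ∀ᵐ y ∂(volume.restrict Ωnl),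
      dist x y < 2 * δ → V y = V x := by
    filter_upwards [Measure.ae_ae_of_ae_prod H2] with x hx
    filter_upwards [hx] with y hy hd
    have hJxy : c ≤ J (x - y) := hJc _ (by rw [← dist_eq_norm]; linarith)
    have hne : J (x - y) ≠ 0 := (lt_of_lt_of_le hc hJxy).ne'
    have hsq : (V x - V y) ^ 2 = 0 := by
      rcases mul_eq_zero.1 hy with h | h
      · exact absurd h hne
      · exact h
    have := sub_eq_zero.1 (pow_eq_zero_iff two_ne_zero |>.1 hsq)
    exact this.symm
  -- zero spreading
  have spread : ∀ S : Set (EuclideanSpace ℝ (Fin N)),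
      (∀ᵐ y ∂(volume.restrict Ωnl), y ∈ S → V y = 0) →
      ∀ᵐ x ∂(volume.restrict Ωnl),
        (∃ p r, 0 < r ∧ ball p r ⊆ S ∧ ball p r ⊆ ball x (2 * δ) ∧ ball p r ⊆ Ωnl)
          → V x = 0 := by
    intro S hS
    filter_upwards [H2'] with x hx
    rintro ⟨p, r, hr, hpS, hpx, hpΩ⟩
    have hae : ∀ᵐ y ∂(volume.restrict Ωnl),
        (y ∈ S → V y = 0) ∧ (dist x y < 2 * δ → V y = V x) := hS.and hx
    have hb : (volume.restrict Ωnl) (ball p r) = volume (ball p r) := by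
      rw [Measure.restrict_apply measurableSet_ball, Set.inter_eq_left.mpr hpΩ]
    have hpos : 0 < (volume.restrict Ωnl) (ball p r) := by
      rw [hb]; exact measure_ball_pos _ _ hr
    obtain ⟨y, hyball, hy⟩ : ∃ y, y ∈ ball p r ∧
        ((y ∈ S → V y = 0) ∧ (dist x y < 2 * δ → V y = V x)) := by
      by_contra hcon
      have h0 : (volume.restrict Ωnl)
          {y | ¬ ((y ∈ S → V y = 0) ∧ (dist x y < 2 * δ → V y = V x))} = 0 :=
        ae_iff.mp hae
      have hsub : ball p r ⊆
          {y | ¬ ((y ∈ S → V y = 0) ∧ (dist x y < 2 * δ → V y = V x))} :=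
        fun y hy' hP => hcon ⟨y, hy', hP⟩
      exact absurd (measure_mono_null hsub h0) hpos.ne'
    have h1 : V y = 0 := hy.1 (hpS hyball)
    have h2 : V y = V x := hy.2 (by
      have := hpx hyball
      rw [mem_ball] at this
      rw [dist_comm]; exact this)
    rw [← h2, h1]
  -- the set A
  set A : Set (EuclideanSpace ℝ (Fin N)) :=
    {x | x ∈ Ωnl ∧ ∀ᵐ y ∂(volume.restrict Ωnl), y ∈ ball x δ → V y = 0} with hA
  have prop : ∀ x ∈ A, ∀ x' ∈ Ωnl, dist x x' < δ → x' ∈ A := by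
    rintro x ⟨hxΩ, hxae⟩ x' hx'Ω hdxx'
    refine ⟨hx'Ω, ?_⟩
    obtain ⟨ρ, hρpos, hρsub⟩ : ∃ ρ > 0, ball x ρ ⊆ Ωnl :=
      Metric.isOpen_iff.1 hΩnl_open x hxΩ
    have hr0 : 0 < min ρ δ := lt_min hρpos hδ
    filter_upwards [spread (ball x δ) hxae] with y hy hyball
    have hdyx : dist y x < 2 * δ := by
      rw [mem_ball] at hyball
      calc dist y x ≤ dist y x' + dist x' x := dist_triangle _ _ _
        _ < δ + δ := by rw [dist_comm x' x]; exact add_lt_add hyball hdxx'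
        _ = 2 * δ := by ring
    refine hy ⟨x, min (min ρ δ) (2 * δ - dist y x), lt_min hr0 (by linarith), ?_, ?_, ?_⟩
    · intro z hz
      rw [mem_ball] at hz ⊢
      exact lt_of_lt_of_le hz ((min_le_left _ _).trans (min_le_right _ _))
    · intro z hz
      rw [mem_ball] at hz ⊢
      have h3 : dist z x < 2 * δ - dist y x := lt_of_lt_of_le hz (min_le_right _ _)
      calc dist z y ≤ dist z x + dist x y := dist_triangle _ _ _
        _ < (2 * δ - dist y x) + dist x y := by linarith
        _ = 2 * δ := by rw [dist_comm x y]; ring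
    · intro z hz
      rw [mem_ball] at hz
      exact hρsub (mem_ball.2 (lt_of_lt_of_le hz ((min_le_left _ _).trans (min_le_left _ _))))
  have hAsub : A ⊆ Ωnl := fun x hx => hx.1
  have hAopen : IsOpen A := by
    rw [Metric.isOpen_iff]
    intro x hx
    obtain ⟨ρ, hρpos, hρsub⟩ : ∃ ρ > 0, ball x ρ ⊆ Ωnl :=
      Metric.isOpen_iff.1 hΩnl_open x (hAsub hx)
    refine ⟨min ρ δ, lt_min hρpos hδ, fun x' hx' => ?_⟩
    rw [mem_ball] at hx'
    refine prop x hx x' (hρsub (mem_ball.2 (lt_of_lt_of_le hx' (min_le_left _ _)))) ?_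
    rw [dist_comm]
    exact lt_of_lt_of_le hx' (min_le_right _ _)
  have hBopen : IsOpen (Ωnl \ A) := by
    rw [Metric.isOpen_iff]
    intro x' hx'
    obtain ⟨ρ, hρpos, hρsub⟩ : ∃ ρ > 0, ball x' ρ ⊆ Ωnl :=
      Metric.isOpen_iff.1 hΩnl_open x' hx'.1
    refine ⟨min ρ δ, lt_min hρpos hδ, fun z hz => ?_⟩
    rw [mem_ball] at hz
    have hzΩ : z ∈ Ωnl := hρsub (mem_ball.2 (lt_of_lt_of_le hz (min_le_left _ _)))
    refine ⟨hzΩ, fun hzA => hx'.2 ?_⟩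
    exact prop z hzA x' hx'.1 (lt_of_lt_of_le hz (min_le_right _ _))
  have hdistAB : ∀ a ∈ A, ∀ b ∈ Ωnl \ A, δ ≤ dist a b := by
    intro a ha b hb
    by_contra hcon
    push_neg at hcon
    exact hb.2 (prop a ha b hb.1 hcon)
  -- seed
  obtain ⟨x₀, hx₀, y₀, hy₀, hd₀⟩ := hP1
  obtain ⟨r₁, hr₁pos, hr₁sub⟩ : ∃ r₁ > 0, ball x₀ r₁ ⊆ Ωl :=
    Metric.isOpen_iff.1 hΩl_open x₀ hx₀
  have hsubc : Ωl ⊆ Ωnlᶜ := by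
    intro z hz hz'
    rw [Set.eq_empty_iff_forall_notMem] at hdisj
    exact hdisj z ⟨hz, hz'⟩
  have hrpos : 0 < min r₁ (δ / 2) := lt_min hr₁pos (by linarith)
  have hlam : ∀ y ∈ ball y₀ (δ / 2), 0 < lamF J Ωnl y := by
    intro y hy
    rw [mem_ball] at hy
    have hvpos : 0 < (volume (ball x₀ (min r₁ (δ / 2)))).toReal :=
      ENNReal.toReal_pos (measure_ball_pos _ _ hrpos).ne' measure_ball_lt_top.ne
    have key : c * (volume (ball x₀ (min r₁ (δ / 2)))).toReal ≤ lamF J Ωnl y := by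
      have step1 : c * (volume (ball x₀ (min r₁ (δ / 2)))).toReal
          = ∫ _ in ball x₀ (min r₁ (δ / 2)), c := by
        rw [setIntegral_const, smul_eq_mul, mul_comm]
        rfl
      have step2 : (∫ _ in ball x₀ (min r₁ (δ / 2)), c)
          ≤ ∫ z in ball x₀ (min r₁ (δ / 2)), J (y - z) := by
        refine setIntegral_mono_on (integrableOn_const measure_ball_lt_top.ne)
          ((hJ_int.comp_sub_left y).integrableOn) measurableSet_ball ?_
        intro z hz
        rw [mem_ball] at hz
        refine hJc _ ?_
        rw [← dist_eq_norm]
        have h5 : dist z x₀ < min r₁ (δ / 2) := hz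
        have h6 : dist y₀ x₀ < δ := by rw [dist_comm]; exact hd₀
        calc dist y z ≤ dist y y₀ + dist y₀ x₀ + dist x₀ z := dist_triangle4 _ _ _ _
          _ ≤ δ / 2 + δ + δ / 2 := by
            have := min_le_right r₁ (δ / 2)
            rw [dist_comm x₀ z]
            exact add_le_add (add_le_add hy.le h6.le) (h5.le.trans this)
          _ = 2 * δ := by ring
      have step3 : (∫ z in ball x₀ (min r₁ (δ / 2)), J (y - z)) ≤ ∫ z in Ωnlᶜ, J (y - z) := by
        refine setIntegral_mono_set ((hJ_int.comp_sub_left y).integrableOn)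
          (ae_of_all _ fun z => hJ_nonneg _) (HasSubset.Subset.eventuallyLE ?_)
        intro z hz
        exact hsubc (hr₁sub (mem_ball.2 (lt_of_lt_of_le (mem_ball.1 hz) (min_le_left _ _))))
      calc c * (volume (ball x₀ (min r₁ (δ / 2)))).toReal
          = ∫ _ in ball x₀ (min r₁ (δ / 2)), c := step1
        _ ≤ ∫ z in ball x₀ (min r₁ (δ / 2)), J (y - z) := step2
        _ ≤ ∫ z in Ωnlᶜ, J (y - z) := step3
        _ = lamF J Ωnl y := rfl
    have : 0 < c * (volume (ball x₀ (min r₁ (δ / 2)))).toReal := by positivity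
    linarith
  have stage1 : ∀ᵐ y ∂(volume.restrict Ωnl), y ∈ ball y₀ (δ / 2) → V y = 0 := by
    filter_upwards [H1] with y h1 hy
    have h3 := hlam y hy
    have hsq : (V y) ^ 2 = 0 := by
      rcases mul_eq_zero.1 h1 with h | h
      · exact absurd h h3.ne'
      · exact h
    exact pow_eq_zero_iff two_ne_zero |>.1 hsq
  obtain ⟨ρ₀, hρ₀pos, hρ₀sub⟩ : ∃ ρ₀ > 0, ball y₀ ρ₀ ⊆ Ωnl :=
    Metric.isOpen_iff.1 hΩnl_open y₀ hy₀
  have hεpos : 0 < min (δ / 2) ρ₀ := lt_min (by linarith) hρ₀pos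
  have hy₀A : y₀ ∈ A := by
    refine ⟨hy₀, ?_⟩
    have hS : ∀ᵐ y ∂(volume.restrict Ωnl), y ∈ ball y₀ (min (δ / 2) ρ₀) → V y = 0 := by
      filter_upwards [stage1] with y h hy
      exact h (mem_ball.2 (lt_of_lt_of_le (mem_ball.1 hy) (min_le_left _ _)))
    filter_upwards [spread (ball y₀ (min (δ / 2) ρ₀)) hS] with y hy hyball
    refine hy ⟨y₀, min (δ / 2) ρ₀, hεpos, subset_rfl, ?_, ?_⟩
    · intro z hz
      rw [mem_ball] at hz hyball ⊢
      have h7 : dist z y₀ < δ / 2 := lt_of_lt_of_le hz (min_le_left _ _)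
      calc dist z y ≤ dist z y₀ + dist y₀ y := dist_triangle _ _ _
        _ < δ / 2 + δ := by rw [dist_comm y₀ y]; exact add_lt_add h7 hyball
        _ ≤ 2 * δ := by linarith
    · intro z hz
      exact hρ₀sub (mem_ball.2 (lt_of_lt_of_le (mem_ball.1 hz) (min_le_right _ _)))
  have hBempty : Ωnl \ A = ∅ := by
    rcases Set.eq_empty_or_nonempty (Ωnl \ A) with h | h
    · exact h
    exfalso
    refine hconn ⟨A, Ωnl \ A, hAopen, hBopen, ⟨y₀, hy₀A⟩, h, ?_, ?_, hdistAB⟩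
    · exact Set.union_diff_cancel hAsub
    · ext z; simp only [Set.mem_inter_iff, Set.mem_diff, Set.mem_empty_iff_false, iff_false]
      rintro ⟨hz1, _, hz3⟩
      exact hz3 hz1
  have hAeq : Ωnl ⊆ A := by
    intro x hx
    by_contra h
    rw [Set.eq_empty_iff_forall_notMem] at hBempty
    exact hBempty x ⟨hx, h⟩
  -- countable cover
  obtain ⟨T, hTc, hTeq⟩ := TopologicalSpace.isOpen_iUnion_countable
    (ι := {x // x ∈ Ωnl}) (fun i => ball (i : EuclideanSpace ℝ (Fin N)) δ)
    (fun i => isOpen_ball)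
  have hTae : ∀ (i : {x // x ∈ Ωnl}) (_ : i ∈ T), ∀ᵐ y ∂(volume.restrict Ωnl),
      y ∈ ball (i : EuclideanSpace ℝ (Fin N)) δ → V y = 0 :=
    fun i _ => (hAeq i.2).2
  have hall := (ae_ball_iff hTc).2 hTae
  filter_upwards [hall, ae_restrict_mem hmΩnl] with y hy hyΩ
  have hmem : y ∈ ⋃ i : {x // x ∈ Ωnl}, ball (i : EuclideanSpace ℝ (Fin N)) δ :=
    Set.mem_iUnion.2 ⟨⟨y, hyΩ⟩, mem_ball_self hδ⟩
  rw [← hTeq] at hmem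
  obtain ⟨i, hiT, hyi⟩ := Set.mem_iUnion₂.1 hmem
  exact hy i hiT hyi

lemma aF_nonneg (hJ_nonneg : ∀ z, 0 ≤ J z) (x : EuclideanSpace ℝ (Fin N)) :
    0 ≤ aF J Ω x := by
  have h1 := lamF_nonneg (Ω := Ω) hJ_nonneg x
  have h2 := muF_nonneg (Ω := Ω) hJ_nonneg x
  unfold aF; linarith

lemma lamF_aesm (hJ_int : Integrable J) :
    AEStronglyMeasurable (lamF J Ωnl) (volume.restrict Ωnl) := by
  have := conv_aesm (t := Ωnl) (s := Ωnlᶜ) hJ_int.aestronglyMeasurable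
    (aestronglyMeasurable_const (b := (1:ℝ)))
  simp only [mul_one] at this
  exact this

lemma muF_aesm (hJ_int : Integrable J) :
    AEStronglyMeasurable (muF J Ωnl) (volume.restrict Ωnl) := by
  have := conv_aesm (t := Ωnl) (s := Ωnl) hJ_int.aestronglyMeasurable
    (aestronglyMeasurable_const (b := (1:ℝ)))
  simp only [mul_one] at this
  exact this

lemma aF_aesm (hJ_int : Integrable J) :
    AEStronglyMeasurable (aF J Ωnl) (volume.restrict Ωnl) := by
  have h := (lamF_aesm (Ωnl := Ωnl) hJ_int).add
    (((muF_aesm (Ωnl := Ωnl) hJ_int)).const_mul 2)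
  exact h

lemma amul_memℒp (hΩnl : MeasurableSet Ωnl) {J : EuclideanSpace ℝ (Fin N) → ℝ}
    (hJ_int : Integrable J) (hJ_nonneg : ∀ z, 0 ≤ J z)
    (h : Lp ℝ 2 (volume.restrict Ωnl)) :
    MemLp (fun x => aF J Ωnl x * (h : EuclideanSpace ℝ (Fin N) → ℝ) x) 2
      (volume.restrict Ωnl) := by
  have hα0 : 0 ≤ ∫ z, J z := integral_nonneg hJ_nonneg
  refine MemLp.of_le ((Lp.memLp h).const_mul (2 * ∫ z, J z))
    ((aF_aesm hJ_int).mul (Lp.aestronglyMeasurable h)) (ae_of_all _ fun x => ?_)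
  rw [Real.norm_eq_abs, Real.norm_eq_abs, abs_mul, abs_mul,
    abs_of_nonneg (aF_nonneg hJ_nonneg x), abs_of_nonneg (by linarith : (0:ℝ) ≤ 2 * ∫ z, J z)]
  exact mul_le_mul_of_nonneg_right (aF_le hΩnl hJ_int hJ_nonneg x) (abs_nonneg _)

lemma key_ineq (hΩnl : MeasurableSet Ωnl) {J : EuclideanSpace ℝ (Fin N) → ℝ}
    (hJ_int : Integrable J) (hJ_nonneg : ∀ z, 0 ≤ J z) (hα : 0 < ∫ z, J z)
    (D W : Lp ℝ 2 (volume.restrict Ωnl))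
    (hDW : ∀ᵐ x ∂(volume.restrict Ωnl),
      (W : EuclideanSpace ℝ (Fin N) → ℝ) x
        = aF J Ωnl x * (D : EuclideanSpace ℝ (Fin N) → ℝ) x) :
    ‖D‖ ≤ (∫ z, J z)⁻¹ * ‖W‖ ∧ ‖W‖ ≤ (2 * ∫ z, J z) * ‖D‖ := by
  constructor
  · have hsq : ‖D‖ ^ 2 ≤ ((∫ z, J z)⁻¹ * ‖W‖) ^ 2 := by
      rw [mul_pow, norm_sq_eq_integral D, norm_sq_eq_integral W, ← integral_const_mul]
      refine integral_mono_ae (Lp.memLp D).integrable_sq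
        (((Lp.memLp W).integrable_sq).const_mul _) ?_
      filter_upwards [hDW] with x hx
      skip
      rw [hx]
      have h5 := aF_ge hΩnl hJ_int hJ_nonneg (J := J) x
      have h6 : (∫ z, J z) ^ 2 * ((D : EuclideanSpace ℝ (Fin N) → ℝ) x) ^ 2
          ≤ (aF J Ωnl x * (D : EuclideanSpace ℝ (Fin N) → ℝ) x) ^ 2 := by
        have h9 : 0 ≤ (aF J Ωnl x - ∫ z, J z) * (aF J Ωnl x + ∫ z, J z)
            * ((D : EuclideanSpace ℝ (Fin N) → ℝ) x) ^ 2 :=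
          mul_nonneg (mul_nonneg (sub_nonneg.2 h5) (by linarith)) (sq_nonneg _)
        nlinarith [h9]
      have h7 : ((∫ z, J z)⁻¹) ^ 2 * ((∫ z, J z) ^ 2
          * ((D : EuclideanSpace ℝ (Fin N) → ℝ) x) ^ 2)
          = ((D : EuclideanSpace ℝ (Fin N) → ℝ) x) ^ 2 := by
        field_simp
      calc ((D : EuclideanSpace ℝ (Fin N) → ℝ) x) ^ 2
          = ((∫ z, J z)⁻¹) ^ 2 * ((∫ z, J z) ^ 2
            * ((D : EuclideanSpace ℝ (Fin N) → ℝ) x) ^ 2) := h7.symm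
        _ ≤ ((∫ z, J z)⁻¹) ^ 2 * (aF J Ωnl x * (D : EuclideanSpace ℝ (Fin N) → ℝ) x) ^ 2 :=
            mul_le_mul_of_nonneg_left h6 (by positivity)
    have h8 := Real.sqrt_le_sqrt hsq
    rwa [Real.sqrt_sq (norm_nonneg D), Real.sqrt_sq (by positivity)] at h8
  · have hsq : ‖W‖ ^ 2 ≤ ((2 * ∫ z, J z) * ‖D‖) ^ 2 := by
      rw [mul_pow, norm_sq_eq_integral D, norm_sq_eq_integral W, ← integral_const_mul]
      refine integral_mono_ae (Lp.memLp W).integrable_sq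
        (((Lp.memLp D).integrable_sq).const_mul _) ?_
      filter_upwards [hDW] with x hx
      skip
      rw [hx]
      have h5 := aF_le hΩnl hJ_int hJ_nonneg (J := J) x
      have h6 := aF_nonneg (Ω := Ωnl) hJ_nonneg (J := J) x
      have h9 : 0 ≤ ((2 * ∫ z, J z) - aF J Ωnl x) * ((2 * ∫ z, J z) + aF J Ωnl x)
          * ((D : EuclideanSpace ℝ (Fin N) → ℝ) x) ^ 2 :=
        mul_nonneg (mul_nonneg (sub_nonneg.2 h5) (by linarith)) (sq_nonneg _)
      nlinarith [h9]
    have h8 := Real.sqrt_le_sqrt hsq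
    rwa [Real.sqrt_sq (norm_nonneg W), Real.sqrt_sq (by positivity)] at h8

end NLP

set_option maxHeartbeats 2000000
set_option synthInstance.maxHeartbeats 400000
open NLP

/-- A priori `L²` bound for solutions of the nonlocal problem with data `(f, u)`:
`‖v‖_{L²(Ω_{nℓ})} ≤ C (‖f‖_{L²(Ω_{nℓ})} + ‖u‖_{L²(Ω_ℓ)})`. -/
theorem nonlocal_problem_apriori_bound {N : ℕ} (δ : ℝ) (hδ : 0 < δ)
    (Ωl Ωnl : Set (EuclideanSpace ℝ (Fin N)))
    (hΩl_open : IsOpen Ωl) (hΩl_bdd : Bornology.IsBounded Ωl)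
    (hΩnl_open : IsOpen Ωnl) (hΩnl_bdd : Bornology.IsBounded Ωnl)
    (hdisj : Ωl ∩ Ωnl = ∅)
    (hΩnl_conn : DeltaConnected δ Ωnl)
    (hP1 : ∃ x ∈ Ωl, ∃ y ∈ Ωnl, dist x y < δ)
    (J : EuclideanSpace ℝ (Fin N) → ℝ)
    (hJ_nonneg : ∀ z, 0 ≤ J z)
    (hJ_symm : ∀ z, J (-z) = J z)
    (hJ_bdd : ∃ M : ℝ, ∀ z, J z ≤ M)
    (hJ_int : Integrable J)
    (hJ1 : ∃ c > (0 : ℝ), ∀ z, ‖z‖ ≤ 2 * δ → c ≤ J z)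
    (hJ2 : ∃ K : Lp ℝ 2 (volume.restrict Ωnl) →L[ℝ] Lp ℝ 2 (volume.restrict Ωnl),
      IsCompactOperator K ∧ ∀ w : Lp ℝ 2 (volume.restrict Ωnl),
        ∀ᵐ x ∂(volume.restrict Ωnl), K w x = ∫ y in Ωnl, J (x - y) * w y) :
    ∃ C > (0 : ℝ),
      ∀ (f : Lp ℝ 2 (volume.restrict Ωnl)) (u : Lp ℝ 2 (volume.restrict Ωl))
        (v : Lp ℝ 2 (volume.restrict Ωnl)),
        (∀ᵐ x ∂(volume.restrict Ωnl),
          -f x = (∫ y in Ωnlᶜ, J (x - y) * (Set.indicator Ωl u y - v x)) +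
            2 * ∫ y in Ωnl, J (x - y) * (v y - v x)) →
        ‖v‖ ≤ C * (‖f‖ + ‖u‖) := by
  classical
  obtain ⟨M, hM⟩ := hJ_bdd
  obtain ⟨c, hc, hJc⟩ := hJ1
  obtain ⟨K, hKcomp, hK⟩ := hJ2
  have hmΩl : MeasurableSet Ωl := hΩl_open.measurableSet
  have hmΩnl : MeasurableSet Ωnl := hΩnl_open.measurableSet
  have hbnl : volume Ωnl ≠ ⊤ := hΩnl_bdd.measure_lt_top.ne
  have hbl : volume Ωl ≠ ⊤ := hΩl_bdd.measure_lt_top.ne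
  haveI : IsFiniteMeasure (volume.restrict Ωnl) :=
    ⟨by rw [Measure.restrict_apply_univ]; exact hbnl.lt_top⟩
  haveI : IsFiniteMeasure (volume.restrict Ωl) :=
    ⟨by rw [Measure.restrict_apply_univ]; exact hbl.lt_top⟩
  have hsubc : Ωl ⊆ Ωnlᶜ := by
    intro z hz hz'
    rw [Set.eq_empty_iff_forall_notMem] at hdisj
    exact hdisj z ⟨hz, hz'⟩
  have hα : 0 < ∫ z, J z := alpha_pos hδ hJ_int hJ_nonneg hc hJc
  have hM0 : 0 ≤ M := le_trans (hJ_nonneg 0) (hM 0)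
  -- the G operator
  have hGmem : ∀ u : Lp ℝ 2 (volume.restrict Ωl),
      MemLp (gU J Ωl Ωnl (u : EuclideanSpace ℝ (Fin N) → ℝ)) 2 (volume.restrict Ωnl) :=
    fun u => gU_memℒp hJ_int hJ_nonneg hM hmΩl hsubc hbnl
      ((Lp.memLp u).integrable one_le_two) (Lp.aestronglyMeasurable u)
  set CG : ℝ := (volume Ωnl).toReal ^ ((1:ℝ)/2) * (M * (volume Ωl).toReal ^ ((1:ℝ)/2))
    with hCGdef
  have hGnorm : ∀ u : Lp ℝ 2 (volume.restrict Ωl), ‖(hGmem u).toLp _‖ ≤ CG * ‖u‖ := by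
    intro u
    have hint : IntegrableOn (u : EuclideanSpace ℝ (Fin N) → ℝ) Ωl volume :=
      (Lp.memLp u).integrable one_le_two
    have habs := gU_abs_le hJ_int hJ_nonneg hM hmΩl hsubc hint
    have hC0 : 0 ≤ M * ∫ y in Ωl, |(u : EuclideanSpace ℝ (Fin N) → ℝ) y| :=
      mul_nonneg hM0 (integral_nonneg fun y => abs_nonneg _)
    have h2 := toLp_norm_le (hGmem u) hC0 habs
    rw [Measure.restrict_apply_univ] at h2
    have h3 := int_abs_le_norm u
    rw [Measure.restrict_apply_univ] at h3
    calc ‖(hGmem u).toLp _‖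
        ≤ (volume Ωnl).toReal ^ ((1:ℝ)/2)
          * (M * ∫ y in Ωl, |(u : EuclideanSpace ℝ (Fin N) → ℝ) y|) := h2
      _ ≤ (volume Ωnl).toReal ^ ((1:ℝ)/2)
          * (M * ((volume Ωl).toReal ^ ((1:ℝ)/2) * ‖u‖)) := by
          refine mul_le_mul_of_nonneg_left (mul_le_mul_of_nonneg_left h3 hM0)
            (Real.rpow_nonneg ENNReal.toReal_nonneg _)
      _ = CG * ‖u‖ := by rw [hCGdef]; ring
  -- scaling of gU
  have hgUsmul : ∀ (t : ℝ) (u : Lp ℝ 2 (volume.restrict Ωl))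
      (x : EuclideanSpace ℝ (Fin N)),
      gU J Ωl Ωnl ((t • u : Lp ℝ 2 (volume.restrict Ωl)) : EuclideanSpace ℝ (Fin N) → ℝ) x
        = t * gU J Ωl Ωnl (u : EuclideanSpace ℝ (Fin N) → ℝ) x := by
    intro t u x
    have h := ae_imp_of_ae_restrict (μ := volume) (s := Ωl) (Lp.coeFn_smul t u)
    have hind : ∀ᵐ y ∂(volume.restrict Ωnlᶜ),
        Ωl.indicator ((t • u : Lp ℝ 2 (volume.restrict Ωl)) : EuclideanSpace ℝ (Fin N) → ℝ) y
          = t * Ωl.indicator (u : EuclideanSpace ℝ (Fin N) → ℝ) y := by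
      refine ae_restrict_of_ae ?_
      filter_upwards [h] with y hy
      by_cases hmem : y ∈ Ωl
      · rw [Set.indicator_of_mem hmem, Set.indicator_of_mem hmem, hy hmem,
          Pi.smul_apply, smul_eq_mul]
      · rw [Set.indicator_of_notMem hmem, Set.indicator_of_notMem hmem, mul_zero]
    simp only [gU]
    rw [integral_congr_ae ((hind.mono fun y hy => by simp only [hy]) :
      (fun y => J (x - y) * Ωl.indicator
        ((t • u : Lp ℝ 2 (volume.restrict Ωl)) : EuclideanSpace ℝ (Fin N) → ℝ) y)
        =ᵐ[volume.restrict Ωnlᶜ]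
      fun y => J (x - y) * (t * Ωl.indicator (u : EuclideanSpace ℝ (Fin N) → ℝ) y))]
    rw [show (fun y => J (x - y) * (t * Ωl.indicator (u : EuclideanSpace ℝ (Fin N) → ℝ) y))
        = fun y => t * (J (x - y) * Ωl.indicator (u : EuclideanSpace ℝ (Fin N) → ℝ) y)
      from funext fun y => by ring]
    rw [integral_const_mul]
  by_contra hC
  push_neg at hC
  -- normalized sequence
  have key : ∀ n : ℕ, ∃ (f : Lp ℝ 2 (volume.restrict Ωnl))
      (u : Lp ℝ 2 (volume.restrict Ωl)) (v : Lp ℝ 2 (volume.restrict Ωnl)),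
      (∀ᵐ x ∂(volume.restrict Ωnl),
        aF J Ωnl x * v x = f x + gU J Ωl Ωnl (u : EuclideanSpace ℝ (Fin N) → ℝ) x
          + 2 * (K v : EuclideanSpace ℝ (Fin N) → ℝ) x) ∧
      ‖v‖ = 1 ∧ ‖f‖ + ‖u‖ ≤ 1 / ((n : ℝ) + 1) := by
    intro n
    obtain ⟨f, u, v, heqn, hlt⟩ := hC ((n : ℝ) + 1) (by positivity)
    have hvpos : 0 < ‖v‖ := lt_of_le_of_lt (by positivity) hlt
    have hrw := eqn_rewrite hmΩl hmΩnl hsubc hbnl hbl hJ_int hJ_nonneg hM f v u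
      ((K v : EuclideanSpace ℝ (Fin N) → ℝ)) (hK v) heqn
    set t : ℝ := ‖v‖⁻¹ with htdef
    have ht0 : 0 ≤ t := inv_nonneg.2 hvpos.le
    refine ⟨t • f, t • u, t • v, ?_, ?_, ?_⟩
    · have hsm : ((K (t • v) : Lp ℝ 2 (volume.restrict Ωnl)) :
          EuclideanSpace ℝ (Fin N) → ℝ)
          =ᵐ[volume.restrict Ωnl] t • ((K v : Lp ℝ 2 (volume.restrict Ωnl)) :
            EuclideanSpace ℝ (Fin N) → ℝ) := by
        rw [ContinuousLinearMap.map_smul]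
        exact Lp.coeFn_smul t (K v)
      filter_upwards [hrw, Lp.coeFn_smul t f, Lp.coeFn_smul t v, hsm] with x h1 h2 h3 h4
      rw [h3, Pi.smul_apply, smul_eq_mul, h2, Pi.smul_apply, smul_eq_mul, h4,
        Pi.smul_apply, smul_eq_mul, hgUsmul t u x]
      calc aF J Ωnl x * (t * (v : EuclideanSpace ℝ (Fin N) → ℝ) x)
          = t * (aF J Ωnl x * (v : EuclideanSpace ℝ (Fin N) → ℝ) x) := by ring
        _ = t * ((f : EuclideanSpace ℝ (Fin N) → ℝ) x
            + gU J Ωl Ωnl (u : EuclideanSpace ℝ (Fin N) → ℝ) x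
            + 2 * (K v : EuclideanSpace ℝ (Fin N) → ℝ) x) := by rw [h1]
        _ = _ := by ring
    · rw [norm_smul, Real.norm_eq_abs, abs_of_nonneg ht0, htdef,
        inv_mul_cancel₀ hvpos.ne']
    · rw [norm_smul, norm_smul, Real.norm_eq_abs, abs_of_nonneg ht0]
      rw [le_div_iff₀ (by positivity : (0:ℝ) < (n : ℝ) + 1)]
      have h11 : ((n : ℝ) + 1) * (‖f‖ + ‖u‖) ≤ ‖v‖ := hlt.le
      calc (t * ‖f‖ + t * ‖u‖) * ((n : ℝ) + 1)
          = t * (((n : ℝ) + 1) * (‖f‖ + ‖u‖)) := by ring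
        _ ≤ t * ‖v‖ := mul_le_mul_of_nonneg_left h11 ht0
        _ = 1 := by rw [htdef, inv_mul_cancel₀ hvpos.ne']
  choose fs us vs hveq hvnorm hsmall using key
  -- the sequence W
  set Gmap : Lp ℝ 2 (volume.restrict Ωl) → Lp ℝ 2 (volume.restrict Ωnl) :=
    fun u => (hGmem u).toLp _ with hGmapdef
  set Wseq : ℕ → Lp ℝ 2 (volume.restrict Ωnl) :=
    fun n => fs n + Gmap (us n) + (2:ℝ) • K (vs n) with hWdef
  have hW : ∀ n, ∀ᵐ x ∂(volume.restrict Ωnl),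
      (Wseq n : EuclideanSpace ℝ (Fin N) → ℝ) x
        = aF J Ωnl x * (vs n : EuclideanSpace ℝ (Fin N) → ℝ) x := by
    intro n
    filter_upwards [Lp.coeFn_add (fs n + Gmap (us n)) ((2:ℝ) • K (vs n)),
      Lp.coeFn_add (fs n) (Gmap (us n)), (hGmem (us n)).coeFn_toLp,
      Lp.coeFn_smul (2:ℝ) (K (vs n)), hveq n] with x h1 h2 h3 h4 h5
    show ((fs n + Gmap (us n) + (2:ℝ) • K (vs n) :
      Lp ℝ 2 (volume.restrict Ωnl)) : EuclideanSpace ℝ (Fin N) → ℝ) x = _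
    rw [h1, Pi.add_apply, h2, Pi.add_apply, h4, Pi.smul_apply, smul_eq_mul, h5]
    have h6 : (Gmap (us n) : EuclideanSpace ℝ (Fin N) → ℝ) x
        = gU J Ωl Ωnl ((us n : Lp ℝ 2 (volume.restrict Ωl)) :
            EuclideanSpace ℝ (Fin N) → ℝ) x := h3
    rw [h6]
  have hdiff : ∀ n m, ‖vs n - vs m‖ ≤ (∫ z, J z)⁻¹ * ‖Wseq n - Wseq m‖ := by
    intro n m
    refine (key_ineq hmΩnl hJ_int hJ_nonneg hα (vs n - vs m) (Wseq n - Wseq m) ?_).1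
    filter_upwards [hW n, hW m, Lp.coeFn_sub (vs n) (vs m),
      Lp.coeFn_sub (Wseq n) (Wseq m)] with x h1 h2 h3 h4
    rw [h4, Pi.sub_apply, h1, h2, h3, Pi.sub_apply]
    ring
  -- convergence of the data to zero
  have hsum0 : Filter.Tendsto (fun n : ℕ => ‖fs n‖ + ‖us n‖) Filter.atTop (nhds 0) :=
    squeeze_zero (fun n => by positivity) hsmall tendsto_one_div_add_atTop_nhds_zero_nat
  have hfs0 : Filter.Tendsto fs Filter.atTop (nhds 0) :=
    tendsto_zero_iff_norm_tendsto_zero.2 (squeeze_zero (fun n => norm_nonneg _)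
      (fun n => le_add_of_nonneg_right (norm_nonneg _)) hsum0)
  have hus0 : Filter.Tendsto us Filter.atTop (nhds 0) :=
    tendsto_zero_iff_norm_tendsto_zero.2 (squeeze_zero (fun n => norm_nonneg _)
      (fun n => le_add_of_nonneg_left (norm_nonneg _)) hsum0)
  have hG0 : Filter.Tendsto (fun n => Gmap (us n)) Filter.atTop (nhds 0) := by
    refine tendsto_zero_iff_norm_tendsto_zero.2
      (squeeze_zero (fun n => norm_nonneg _) (fun n => hGnorm (us n)) ?_)
    simpa using (hus0.norm.const_mul CG)
  -- compactness
  have hcpt : IsCompact (closure (⇑(K.toLinearMap) '' Metric.closedBall 0 1)) := by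
    refine IsCompactOperator.isCompact_closure_image_of_isVonNBounded
      (f := K.toLinearMap) ?_ (NormedSpace.isVonNBounded_closedBall ℝ _ 1)
    exact hKcomp
  have hmem : ∀ n, K (vs n) ∈ closure (⇑(K.toLinearMap) '' Metric.closedBall 0 1) :=
    fun n => subset_closure ⟨vs n, mem_closedBall_zero_iff.2 (le_of_eq (hvnorm n)), rfl⟩
  obtain ⟨w, hwmem, φ, hφ, hconv⟩ := hcpt.tendsto_subseq hmem
  -- W along the subsequence converges to 2w
  have hWconv : Filter.Tendsto (fun k => Wseq (φ k)) Filter.atTop (nhds ((2:ℝ) • w)) := by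
    have h1 : Filter.Tendsto (fun k => fs (φ k)) Filter.atTop (nhds 0) :=
      hfs0.comp hφ.tendsto_atTop
    have h2 : Filter.Tendsto (fun k => Gmap (us (φ k))) Filter.atTop (nhds 0) :=
      hG0.comp hφ.tendsto_atTop
    have h3 : Filter.Tendsto (fun k => (2:ℝ) • K (vs (φ k))) Filter.atTop
        (nhds ((2:ℝ) • w)) := hconv.const_smul (2:ℝ)
    have h4 := (h1.add h2).add h3
    simpa using h4
  -- Cauchy and limit
  have hvCauchy : CauchySeq (fun k => vs (φ k)) := by
    rw [Metric.cauchySeq_iff]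
    intro ε hε
    obtain ⟨n0, hn0⟩ := Metric.cauchySeq_iff.1 hWconv.cauchySeq ((∫ z, J z) * ε)
      (by positivity)
    refine ⟨n0, fun m hm n hn => ?_⟩
    have h1 := hdiff (φ m) (φ n)
    have h2 := hn0 m hm n hn
    rw [dist_eq_norm] at h2 ⊢
    calc ‖vs (φ m) - vs (φ n)‖ ≤ (∫ z, J z)⁻¹ * ‖Wseq (φ m) - Wseq (φ n)‖ := h1
      _ < (∫ z, J z)⁻¹ * ((∫ z, J z) * ε) :=
          mul_lt_mul_of_pos_left h2 (inv_pos.2 hα)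
      _ = ε := by field_simp
  obtain ⟨vlim, hvlim⟩ := cauchySeq_tendsto_of_complete hvCauchy
  have hnorm1 : ‖vlim‖ = 1 := by
    have h1 := hvlim.norm
    have h2 : (fun k => ‖vs (φ k)‖) = fun _ => (1:ℝ) := funext fun k => hvnorm _
    rw [h2] at h1
    exact (tendsto_nhds_unique h1 tendsto_const_nhds)
  have hwK : w = K vlim :=
    tendsto_nhds_unique hconv ((K.continuous.tendsto vlim).comp hvlim)
  -- the limit identity
  have hAv := amul_memℒp hmΩnl hJ_int hJ_nonneg vlim
  have hAconv : Filter.Tendsto (fun k => Wseq (φ k)) Filter.atTop (nhds (hAv.toLp _)) := by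
    rw [tendsto_iff_norm_sub_tendsto_zero]
    have hb : ∀ k, ‖Wseq (φ k) - hAv.toLp _‖ ≤ (2 * ∫ z, J z) * ‖vs (φ k) - vlim‖ := by
      intro k
      refine (key_ineq hmΩnl hJ_int hJ_nonneg hα (vs (φ k) - vlim)
        (Wseq (φ k) - hAv.toLp _) ?_).2
      filter_upwards [hW (φ k), hAv.coeFn_toLp, Lp.coeFn_sub (vs (φ k)) vlim,
        Lp.coeFn_sub (Wseq (φ k)) (hAv.toLp _)] with x h1 h2 h3 h4
      rw [h4, Pi.sub_apply, h1, h2, h3, Pi.sub_apply]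
      ring
    refine squeeze_zero (fun k => norm_nonneg _) hb ?_
    have h5 := tendsto_iff_norm_sub_tendsto_zero.1 hvlim
    simpa using (h5.const_mul (2 * ∫ z, J z))
  have hAlim_eq : hAv.toLp _ = (2:ℝ) • w := tendsto_nhds_unique hAconv hWconv
  have hid : ∀ᵐ x ∂(volume.restrict Ωnl),
      aF J Ωnl x * (vlim : EuclideanSpace ℝ (Fin N) → ℝ) x
        = 2 * ∫ y in Ωnl, J (x - y) * (vlim : EuclideanSpace ℝ (Fin N) → ℝ) y := by
    have h2 : ((hAv.toLp _ : Lp ℝ 2 (volume.restrict Ωnl)) :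
        EuclideanSpace ℝ (Fin N) → ℝ)
        =ᵐ[volume.restrict Ωnl] (((2:ℝ) • K vlim : Lp ℝ 2 (volume.restrict Ωnl)) :
          EuclideanSpace ℝ (Fin N) → ℝ) := by
      rw [hAlim_eq, hwK]
    filter_upwards [hAv.coeFn_toLp, h2, Lp.coeFn_smul (2:ℝ) (K vlim), hK vlim]
      with x e1 e2 e3 e4
    rw [← e1, e2, e3, Pi.smul_apply, smul_eq_mul, e4]
  obtain ⟨H1, H2⟩ := quad_form hmΩnl hbnl hJ_int hJ_nonneg hJ_symm hM vlim hid
  have hfinal := geometry hδ hΩl_open hΩnl_open hdisj hΩnl_conn hP1 hJ_int hJ_nonneg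
    hc hJc H1 H2
  have hz : ‖vlim‖ = 0 := by
    have h0 : (vlim : EuclideanSpace ℝ (Fin N) → ℝ)
        =ᵐ[volume.restrict Ωnl] (fun _ => (0:ℝ)) := hfinal
    rw [Lp.norm_def, eLpNorm_congr_ae h0, eLpNorm_zero', ENNReal.toReal_zero]
  rw [hnorm1] at hz
  exact one_ne_zero hz
end
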